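/- arXiv:0905.2708 — 8 statements merged into one kernel-verified Lean document; each statement's English description precedes it below -/
import Mathlib

section
/- If φ: Mₙ(ℂ) → Mₙ(ℂ) is a linear map with no negative eigenvalues such that φ(I + tφ)⁻¹ is completely positive for all t ≥ 0, then for every s ≥ 0 the map φ^(s) := φ(I + sφ)⁻¹ also has this property; i.e., φ^(s)(I + t φ^(s))⁻¹ is completely positive for all t ≥ 0. Moreover φ^(s)(I + t φ^(s))⁻¹ = φ(I + (s+t)φ)⁻¹. -/
open scoped ComplexOrder BigOperators
open Matrix

abbrev MatC (n : ℕ) := Matrix (Fin n) (Fin n) ℂ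

/-- Complete positivity of a linear map on `Mₙ(ℂ)`:
for all finite families `Aᵢ`, `fᵢ`, `∑ ⟨fᵢ, φ(Aᵢ* Aⱼ) fⱼ⟩ ≥ 0`. -/
def IsCP {n : ℕ} (φ : Module.End ℂ (MatC n)) : Prop :=
  ∀ (m : ℕ) (A : Fin m → MatC n) (f : Fin m → (Fin n → ℂ)),
    0 ≤ ∑ i, ∑ j, star (f i) ⬝ᵥ ((φ ((A i)ᴴ * A j)) *ᵥ f j)

/-- `φ` has no negative (real) eigenvalues. -/
def NoNegEig {n : ℕ} (φ : Module.End ℂ (MatC n)) : Prop :=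
  ∀ r : ℝ, r < 0 → ¬ Module.End.HasEigenvalue φ (r : ℂ)

/-- `φ^(t) = φ ∘ (I + t φ)⁻¹`. -/
noncomputable def qRes {n : ℕ} (φ : Module.End ℂ (MatC n)) (t : ℝ) :
    Module.End ℂ (MatC n) :=
  φ * Ring.inverse (1 + (t : ℂ) • φ)

/-- `φ` is q-positive. -/
def IsQPos {n : ℕ} (φ : Module.End ℂ (MatC n)) : Prop :=
  NoNegEig φ ∧ ∀ t : ℝ, 0 ≤ t → IsCP (qRes φ t)

/-- `φ ≥_q ψ` : `φ(I+tφ)⁻¹ − ψ(I+tψ)⁻¹` is completely positive for all `t ≥ 0`. -/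
def qLE {n : ℕ} (ψ φ : Module.End ℂ (MatC n)) : Prop :=
  ∀ t : ℝ, 0 ≤ t → IsCP (qRes φ t - qRes ψ t)

/-- `φ` is q-pure: its q-subordinates are exactly `{0} ∪ {φ^(s) : s ≥ 0}`. -/
def IsQPure {n : ℕ} (φ : Module.End ℂ (MatC n)) : Prop :=
  IsQPos φ ∧ ∀ ψ : Module.End ℂ (MatC n),
    (IsQPos ψ ∧ qLE ψ φ) ↔ (ψ = 0 ∨ ∃ s : ℝ, 0 ≤ s ∧ ψ = qRes φ s)


lemma isUnit_one_add_smul {n : ℕ} (φ : Module.End ℂ (MatC n))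
    (h1 : NoNegEig φ) (s : ℝ) (hs : 0 ≤ s) : IsUnit (1 + (s : ℂ) • φ) := by
  rcases eq_or_lt_of_le hs with h | h
  · simp [← h]
  · rw [Module.End.isUnit_iff]
    rw [Function.Bijective]
    have hinj : Function.Injective ⇑(1 + (s : ℂ) • φ : Module.End ℂ (MatC n)) := by
      rw [← LinearMap.ker_eq_bot]
      rw [Submodule.eq_bot_iff]
      intro x hx
      by_contra hx0
      have hker : (1 + (s : ℂ) • φ : Module.End ℂ (MatC n)) x = 0 := hx
      have hφx : φ x = ((-s⁻¹ : ℝ) : ℂ) • x := by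
        have hs0 : (s : ℂ) ≠ 0 := by exact_mod_cast h.ne'
        have heq : (s : ℂ) • φ x = -x := by
          rw [eq_neg_iff_add_eq_zero, add_comm]
          simpa using hker
        have h2' : φ x = (s : ℂ)⁻¹ • -x := by
          rw [← heq, smul_smul, inv_mul_cancel₀ hs0, one_smul]
        rw [h2', smul_neg, ← neg_smul]
        norm_num
      exact h1 (-s⁻¹) (by simp [h, inv_pos.mpr h])
        (Module.End.hasEigenvalue_of_hasEigenvector
          ⟨Module.End.mem_eigenspace_iff.mpr hφx, hx0⟩)
    exact ⟨hinj, (LinearMap.injective_iff_surjective).mp hinj⟩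

/-- If `φ` has no negative eigenvalues and `φ(I+tφ)⁻¹` is CP for all `t ≥ 0`,
then for every `s ≥ 0` so does `φ^(s) = φ(I+sφ)⁻¹`, and moreover
`φ^(s)(I + t φ^(s))⁻¹ = φ(I + (s+t)φ)⁻¹`. -/
theorem stmt0 {n : ℕ} (φ : Module.End ℂ (MatC n))
    (h1 : NoNegEig φ) (h2 : ∀ t : ℝ, 0 ≤ t → IsCP (qRes φ t)) :
    ∀ s : ℝ, 0 ≤ s →
      (∀ t : ℝ, 0 ≤ t → IsCP (qRes (qRes φ s) t)) ∧
      (∀ t : ℝ, 0 ≤ t → qRes (qRes φ s) t = qRes φ (s + t)) := by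
  intro s hs
  have hsuff : ∀ t : ℝ, 0 ≤ t → qRes (qRes φ s) t = qRes φ (s + t) := by
    intro t ht
    obtain ⟨c, hc⟩ := isUnit_one_add_smul φ h1 s hs
    obtain ⟨d, hd⟩ := isUnit_one_add_smul φ h1 (s + t) (by linarith)
    have hq : qRes φ s = φ * ↑c⁻¹ := by
      rw [qRes, ← hc, Ring.inverse_unit]
    have hmain : (1 : Module.End ℂ (MatC n)) + (t : ℂ) • qRes φ s
        = ↑(d * c⁻¹) := by
      rw [hq, Units.val_mul]
      have hb : (d : Module.End ℂ (MatC n)) = (c : Module.End ℂ (MatC n)) + (t : ℂ) • φ := by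
        rw [hd, hc]; push_cast; rw [add_smul, ← add_assoc]
      rw [hb, add_mul, Units.mul_inv, smul_mul_assoc]
    calc qRes (qRes φ s) t = qRes φ s * ↑(d * c⁻¹)⁻¹ := by
          rw [qRes, hmain, Ring.inverse_unit]
      _ = φ * ↑d⁻¹ := by
          rw [hq, _root_.mul_inv_rev, inv_inv, Units.val_mul, mul_assoc,
            ← mul_assoc (↑c⁻¹ : Module.End ℂ (MatC n)), Units.inv_mul, one_mul]
      _ = qRes φ (s + t) := by rw [qRes, ← hd, Ring.inverse_unit]
  exact ⟨fun t ht => hsuff t ht ▸ h2 (s + t) (by linarith), hsuff⟩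
end

section
/- If φ: Mₙ(ℂ) → Mₙ(ℂ) is q-positive and 0 ≤ s₁ ≤ s₂, then φ^(s₁) q-dominates φ^(s₂); that is, φ^(s₁)(I + t φ^(s₁))⁻¹ − φ^(s₂)(I + t φ^(s₂))⁻¹ is completely positive for all t ≥ 0. In fact this difference equals (s₂ − s₁)·(φ(I + (s₂+t)φ)⁻¹) ∘ (φ(I + (s₁+t)φ)⁻¹). -/
open scoped ComplexOrder BigOperators
open Matrix

lemma isHermitian_of_nonneg_quadform {m : Type*} [Fintype m] [DecidableEq m]
    (M : Matrix m m ℂ) (h : ∀ x : m → ℂ, 0 ≤ star x ⬝ᵥ M *ᵥ x) : M.IsHermitian := by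
  rw [Matrix.isHermitian_iff_isSymmetric, LinearMap.isSymmetric_iff_inner_map_self_real]
  intro v
  obtain ⟨x, rfl⟩ := (WithLp.equiv 2 (m → ℂ)).symm.surjective v
  simp only [WithLp.equiv_symm_apply, Matrix.toEuclideanLin_toLp, EuclideanSpace.inner_toLp_toLp,
    Matrix.toLin'_apply]
  have h1 : star (M *ᵥ x) ⬝ᵥ x = star (star x ⬝ᵥ M *ᵥ x) := by rw [star_dotProduct]
  have h2 : star (star x ⬝ᵥ M *ᵥ x) = star x ⬝ᵥ M *ᵥ x := IsSelfAdjoint.of_nonneg (h x)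
  rw [dotProduct_comm, h1, h2]; exact h2

lemma IsCP.kraus {n : ℕ} {φ : Module.End ℂ (MatC n)} (hφ : IsCP φ) (hn : 0 < n) :
    ∃ K : (Fin n × Fin n) → MatC n, ∀ X : MatC n, φ X = ∑ a, (K a)ᴴ * X * K a := by
  classical
  set z : Fin n := ⟨0, hn⟩ with hz
  set C : Matrix (Fin n × Fin n) (Fin n × Fin n) ℂ :=
    Matrix.of (fun p q => φ (single p.1 q.1 1) p.2 q.2) with hC
  have hstd : ∀ i j : Fin n, (single z i (1:ℂ))ᴴ * single z j 1
      = single i j 1 := by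
    intro i j
    have hct : (single z i (1:ℂ))ᴴ = single i z 1 := by
      ext a b
      simp [Matrix.single_apply, Matrix.conjTranspose_apply, and_comm,
        apply_ite (starRingEnd ℂ)]
    rw [hct, Matrix.single_mul_single_same, one_mul]
  have hpos : ∀ x : (Fin n × Fin n) → ℂ, 0 ≤ star x ⬝ᵥ C *ᵥ x := by
    intro x
    have key := hφ n (fun i => single z i 1) (fun i => fun k => x (i,k))
    simp only [hstd] at key
    convert key using 1
    calc star x ⬝ᵥ C *ᵥ x
        = ∑ p : Fin n × Fin n, ∑ q : Fin n × Fin n, star (x p) * (C p q * x q) := by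
          simp [dotProduct, mulVec, Finset.mul_sum]
      _ = ∑ i, ∑ j, ∑ k, ∑ l, star (x (i,k)) * (φ (single i j 1) k l * x (j,l)) := by
          rw [Fintype.sum_prod_type]
          refine Finset.sum_congr rfl fun i _ => ?_
          rw [Finset.sum_congr rfl (fun k _ => Fintype.sum_prod_type
            (f := fun q => star (x (i,k)) * (C (i,k) q * x q))), Finset.sum_comm]
          rfl
      _ = ∑ i, ∑ j, star (fun k => x (i,k)) ⬝ᵥ
            (φ (single i j 1) *ᵥ fun k => x (j,k)) := by
          simp [dotProduct, mulVec, Finset.mul_sum]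
  obtain ⟨B, hB⟩ : ∃ B : Matrix (Fin n × Fin n) (Fin n × Fin n) ℂ, C = Bᴴ * B := by
    open scoped MatrixOrder Matrix.Norms.L2Operator in
    exact CStarAlgebra.nonneg_iff_eq_star_mul_self.mp (Matrix.posSemidef_iff_dotProduct_mulVec.2
      ⟨isHermitian_of_nonneg_quadform C hpos, hpos⟩).nonneg
  refine ⟨fun a => Matrix.of (fun i k => B a (i,k)), fun X => ?_⟩
  have hX : φ X = ∑ i, ∑ j, X i j • φ (single i j 1) := by
    conv_lhs => rw [matrix_eq_sum_single X]
    rw [map_sum]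
    refine Finset.sum_congr rfl fun i _ => ?_
    rw [map_sum]
    refine Finset.sum_congr rfl fun j _ => ?_
    rw [show single i j (X i j) = X i j • single i j 1 by
      rw [smul_single, smul_eq_mul, mul_one]]
    exact φ.map_smul _ _
  ext k l
  have hCe : ∀ i j : Fin n, φ (single i j 1) k l = ∑ a, star (B a (i,k)) * B a (j,l) := by
    intro i j
    have := congrFun (congrFun hB (i,k)) (j,l)
    simpa [hC, Matrix.mul_apply, Matrix.conjTranspose_apply] using this
  have hR : ∀ a : Fin n × Fin n,
      ((Matrix.of fun i k => B a (i,k))ᴴ * X * Matrix.of fun i k => B a (i,k)) k l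
      = ∑ i, ∑ j, X i j * (star (B a (i,k)) * B a (j,l)) := by
    intro a
    simp only [Matrix.mul_apply, Matrix.conjTranspose_apply, Matrix.of_apply, Finset.sum_mul]
    rw [Finset.sum_comm]
    exact Finset.sum_congr rfl fun i _ => Finset.sum_congr rfl fun j _ => by ring
  simp only [hX, Matrix.sum_apply, Matrix.smul_apply, smul_eq_mul, hCe, Finset.mul_sum]
  calc ∑ i, ∑ j, ∑ a, X i j * (star (B a (i,k)) * B a (j,l))
      = ∑ i, ∑ a, ∑ j, X i j * (star (B a (i,k)) * B a (j,l)) :=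
        Finset.sum_congr rfl fun i _ => Finset.sum_comm
    _ = ∑ a, ∑ i, ∑ j, X i j * (star (B a (i,k)) * B a (j,l)) := Finset.sum_comm
    _ = _ := Finset.sum_congr rfl fun a _ => (hR a).symm
lemma isCP_smul {n : ℕ} {φ : Module.End ℂ (MatC n)} (hφ : IsCP φ) {c : ℝ} (hc : 0 ≤ c) :
    IsCP ((c:ℂ) • φ) := by
  intro m A f
  simp only [LinearMap.smul_apply, Matrix.smul_mulVec, dotProduct_smul,
    smul_eq_mul, ← Finset.mul_sum]
  exact mul_nonneg (by exact_mod_cast hc) (hφ m A f)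

lemma IsCP.comp {n : ℕ} {φ ψ : Module.End ℂ (MatC n)} (hφ : IsCP φ) (hψ : IsCP ψ) :
    IsCP (φ * ψ) := by
  rcases Nat.eq_zero_or_pos n with h0 | hn
  · subst h0
    intro m A f
    simp [dotProduct]
  · obtain ⟨K, hK⟩ := hφ.kraus hn
    intro m A f
    have hterm : ∀ i j : Fin m, star (f i) ⬝ᵥ ((φ * ψ) ((A i)ᴴ * A j) *ᵥ f j)
        = ∑ a, star (K a *ᵥ f i) ⬝ᵥ (ψ ((A i)ᴴ * A j) *ᵥ (K a *ᵥ f j)) := by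
      intro i j
      have hsum : (∑ a : Fin n × Fin n, (K a)ᴴ * ψ ((A i)ᴴ * A j) * K a) *ᵥ f j
          = ∑ a : Fin n × Fin n, ((K a)ᴴ * ψ ((A i)ᴴ * A j) * K a) *ᵥ f j := by
        ext k
        simp only [Matrix.mulVec, dotProduct, Matrix.sum_apply, Finset.sum_mul,
          Finset.sum_apply]
        exact Finset.sum_comm
      have hdot : star (f i) ⬝ᵥ (∑ a : Fin n × Fin n, ((K a)ᴴ * ψ ((A i)ᴴ * A j) * K a) *ᵥ f j)
          = ∑ a : Fin n × Fin n,
              star (f i) ⬝ᵥ (((K a)ᴴ * ψ ((A i)ᴴ * A j) * K a) *ᵥ f j) := by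
        simp only [dotProduct, Finset.sum_apply, Finset.mul_sum]
        exact Finset.sum_comm
      rw [Module.End.mul_apply, hK (ψ ((A i)ᴴ * A j)), hsum, hdot]
      refine Finset.sum_congr rfl fun a _ => ?_
      rw [← Matrix.mulVec_mulVec, ← Matrix.mulVec_mulVec, star_mulVec,
        ← Matrix.dotProduct_mulVec]
    simp only [hterm]
    calc (0:ℂ) ≤ ∑ a : Fin n × Fin n, ∑ i, ∑ j,
          star (K a *ᵥ f i) ⬝ᵥ (ψ ((A i)ᴴ * A j) *ᵥ (K a *ᵥ f j)) :=
        Finset.sum_nonneg fun a _ => hψ m A (fun i => K a *ᵥ f i)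
      _ = ∑ i, ∑ j, ∑ a, star (K a *ᵥ f i) ⬝ᵥ (ψ ((A i)ᴴ * A j) *ᵥ (K a *ᵥ f j)) := by
        rw [Finset.sum_comm]
        exact Finset.sum_congr rfl fun i _ => Finset.sum_comm
lemma Commute.ringInverse_right {R : Type*} [MonoidWithZero R] {x u : R}
    (h : Commute x u) (hu : IsUnit u) : Commute x (Ring.inverse u) := by
  obtain ⟨U, rfl⟩ := hu
  rw [Ring.inverse_unit]
  exact h.units_inv_right

lemma ring_inverse_eq {R : Type*} [MonoidWithZero R] {w z : R}
    (hw : IsUnit w) (h : z * w = 1) : Ring.inverse w = z := by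
  calc Ring.inverse w = 1 * Ring.inverse w := (one_mul _).symm
    _ = z * w * Ring.inverse w := by rw [h]
    _ = z := by rw [mul_assoc, Ring.mul_inverse_cancel _ hw, mul_one]

lemma NoNegEig.isUnit {n : ℕ} {φ : Module.End ℂ (MatC n)} (hφ : NoNegEig φ)
    {a : ℝ} (ha : 0 ≤ a) : IsUnit (1 + (a:ℂ) • φ) := by
  rcases eq_or_lt_of_le ha with rfl | ha'
  · simp
  · have ha0 : (a:ℂ) ≠ 0 := by exact_mod_cast ha'.ne'
    have hinj : Function.Injective (1 + (a:ℂ) • φ : Module.End ℂ (MatC n)) := by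
      rw [← LinearMap.ker_eq_bot, Submodule.eq_bot_iff]
      intro x hx
      by_contra hx0
      have hx' : x + (a:ℂ) • φ x = 0 := by
        simpa [LinearMap.add_apply, LinearMap.smul_apply] using hx
      have h1 : (a:ℂ) • φ x = -x := eq_neg_of_add_eq_zero_right hx'
      have hxe : φ x = ((-a⁻¹ : ℝ) : ℂ) • x := by
        have : φ x = -(a:ℂ)⁻¹ • x := by
          calc φ x = (a:ℂ)⁻¹ • ((a:ℂ) • φ x) := (inv_smul_smul₀ ha0 _).symm
            _ = (a:ℂ)⁻¹ • (-x) := by rw [h1]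
            _ = -(a:ℂ)⁻¹ • x := by rw [smul_neg, neg_smul]
        rw [this]
        norm_num
      have hev : Module.End.HasEigenvalue φ ((-a⁻¹ : ℝ) : ℂ) :=
        Module.End.hasEigenvalue_of_hasEigenvector
          ⟨Module.End.mem_eigenspace_iff.2 hxe, hx0⟩
      exact hφ _ (neg_lt_zero.2 (inv_pos.2 ha')) hev
    rw [Module.End.isUnit_iff]
    exact ⟨hinj, LinearMap.injective_iff_surjective.1 hinj⟩

lemma qRes_qRes {n : ℕ} {φ : Module.End ℂ (MatC n)} (hφ : NoNegEig φ) {s t : ℝ}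
    (hs : 0 ≤ s) (ht : 0 ≤ t) : qRes (qRes φ s) t = qRes φ (s + t) := by
  have hU := hφ.isUnit hs
  have hV := hφ.isUnit (by linarith : (0:ℝ) ≤ s + t)
  set A : Module.End ℂ (MatC n) := 1 + (s:ℂ) • φ with hA
  set B : Module.End ℂ (MatC n) := 1 + ((s + t : ℝ):ℂ) • φ with hB
  have key : (1 : Module.End ℂ (MatC n)) + (t:ℂ) • qRes φ s = B * Ring.inverse A := by
    have hsplit : ((s + t : ℝ):ℂ) • φ = (s:ℂ) • φ + (t:ℂ) • φ := by
      push_cast; rw [add_smul]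
    rw [hB, hsplit, ← add_assoc, add_mul, Ring.mul_inverse_cancel _ hU, smul_mul_assoc]
    rfl
  have hBiA : IsUnit (B * Ring.inverse A) := hV.mul hU.ringInverse
  have hinv : Ring.inverse (B * Ring.inverse A) = A * Ring.inverse B := by
    refine ring_inverse_eq hBiA ?_
    rw [← mul_assoc, mul_assoc A, Ring.inverse_mul_cancel _ hV, mul_one,
      Ring.mul_inverse_cancel _ hU]
  rw [qRes, key, hinv, qRes, ← hA]
  rw [← mul_assoc, mul_assoc φ, Ring.inverse_mul_cancel _ hU, mul_one]
  rfl

lemma qRes_sub {n : ℕ} {φ : Module.End ℂ (MatC n)} (hφ : NoNegEig φ) {a b : ℝ}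
    (ha : 0 ≤ a) (hb : 0 ≤ b) :
    qRes φ a - qRes φ b = ((b - a : ℝ) : ℂ) • (qRes φ b * qRes φ a) := by
  have hA := hφ.isUnit ha
  have hB := hφ.isUnit hb
  set A : Module.End ℂ (MatC n) := 1 + (a:ℂ) • φ with hAd
  set B : Module.End ℂ (MatC n) := 1 + (b:ℂ) • φ with hBd
  have cφA : Commute φ A :=
    (Commute.one_right φ).add_right ((Commute.refl φ).smul_right _)
  have cφB : Commute φ B :=
    (Commute.one_right φ).add_right ((Commute.refl φ).smul_right _)
  have cAB : Commute A B := (Commute.one_left B).add_left (cφB.smul_left _)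
  have cφAi : Commute φ (Ring.inverse A) := cφA.ringInverse_right hA
  have cφBi : Commute φ (Ring.inverse B) := cφB.ringInverse_right hB
  have cAiBi : Commute (Ring.inverse A) (Ring.inverse B) :=
    cAB.ringInverse_ringInverse
  have hBA : B - A = ((b - a : ℝ):ℂ) • φ := by
    rw [hAd, hBd]
    push_cast
    module
  have key : φ * Ring.inverse A - φ * Ring.inverse B
      = φ * Ring.inverse A * (B - A) * Ring.inverse B := by
    rw [mul_sub, sub_mul,
      mul_assoc (φ * Ring.inverse A), Ring.mul_inverse_cancel _ hB, mul_one,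
      mul_assoc φ, Ring.inverse_mul_cancel _ hA, mul_one]
  rw [qRes, qRes, ← hAd, ← hBd, key, hBA]
  rw [mul_smul_comm, smul_mul_assoc]
  congr 1
  calc φ * Ring.inverse A * φ * Ring.inverse B
      = φ * (Ring.inverse A * φ) * Ring.inverse B := by rw [mul_assoc φ]
    _ = φ * (φ * Ring.inverse A) * Ring.inverse B := by rw [← cφAi.eq]
    _ = φ * φ * (Ring.inverse A * Ring.inverse B) := by
        rw [← mul_assoc, mul_assoc (φ * φ)]
    _ = φ * φ * (Ring.inverse B * Ring.inverse A) := by rw [cAiBi.eq]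
    _ = φ * (φ * Ring.inverse B) * Ring.inverse A := by rw [← mul_assoc, mul_assoc φ φ]
    _ = φ * (Ring.inverse B * φ) * Ring.inverse A := by rw [cφBi.eq]
    _ = φ * Ring.inverse B * (φ * Ring.inverse A) := by rw [← mul_assoc, mul_assoc]

/-- For q-positive `φ` and `0 ≤ s₁ ≤ s₂`, `φ^(s₁) ≥_q φ^(s₂)`, and the difference of
resolvents equals `(s₂−s₁)·φ(I+(s₂+t)φ)⁻¹ ∘ φ(I+(s₁+t)φ)⁻¹`. -/
theorem stmt1 {n : ℕ} (φ : Module.End ℂ (MatC n)) (hφ : IsQPos φ)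
    (s₁ s₂ : ℝ) (h1 : 0 ≤ s₁) (h12 : s₁ ≤ s₂) :
    qLE (qRes φ s₂) (qRes φ s₁) ∧
    ∀ t : ℝ, 0 ≤ t →
      qRes (qRes φ s₁) t - qRes (qRes φ s₂) t
        = ((s₂ - s₁ : ℝ) : ℂ) • (qRes φ (s₂ + t) * qRes φ (s₁ + t)) := by
  obtain ⟨hne, hcp⟩ := hφ
  have h2 : 0 ≤ s₂ := le_trans h1 h12
  have heq : ∀ t : ℝ, 0 ≤ t →
      qRes (qRes φ s₁) t - qRes (qRes φ s₂) t
        = ((s₂ - s₁ : ℝ) : ℂ) • (qRes φ (s₂ + t) * qRes φ (s₁ + t)) := by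
    intro t ht
    rw [qRes_qRes hne h1 ht, qRes_qRes hne h2 ht,
      qRes_sub hne (by linarith : (0:ℝ) ≤ s₁ + t) (by linarith : (0:ℝ) ≤ s₂ + t)]
    congr 1
    push_cast; ring
  refine ⟨fun t ht => ?_, heq⟩
  rw [heq t ht]
  exact isCP_smul ((hcp (s₂ + t) (by linarith)).comp (hcp (s₁ + t) (by linarith)))
    (by linarith)
end

section
/- Let ρ be a state on Mₙ(ℂ) and define φ(A) = ρ(A)·I. Then φ is q-positive, and φ(I + tφ)⁻¹ = (1/(1+t))·φ for all t ≥ 0. -/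
open scoped ComplexOrder BigOperators
open Matrix

/-- For a state `ρ` on `Mₙ(ℂ)`, the map `φ(A) = ρ(A)·I` is q-positive and
`φ(I+tφ)⁻¹ = (1/(1+t))·φ` for all `t ≥ 0`. -/
theorem stmt2 {n : ℕ} (ρ : MatC n →ₗ[ℂ] ℂ)
    (hpos : ∀ A : MatC n, A.PosSemidef → 0 ≤ ρ A) (hone : ρ 1 = 1) :
    IsQPos (ρ.smulRight (1 : MatC n)) ∧
    ∀ t : ℝ, 0 ≤ t →
      qRes (ρ.smulRight (1 : MatC n)) t
        = ((1 / (1 + t) : ℝ) : ℂ) • (ρ.smulRight (1 : MatC n) : Module.End ℂ (MatC n)) := by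
  set φ : Module.End ℂ (MatC n) := ρ.smulRight (1 : MatC n) with hφdef
  have hφA : ∀ A : MatC n, φ A = ρ A • 1 := fun A => rfl
  have hidem : φ * φ = φ := by
    ext A
    simp [Module.End.mul_apply, hφA, _root_.map_smul, smul_smul, hone]
  -- resolvent formula
  have hres : ∀ t : ℝ, 0 ≤ t → qRes φ t = ((1 / (1 + t) : ℝ) : ℂ) • φ := by
    intro t ht
    have h1t : (1 + (t : ℂ)) ≠ 0 := by
      have h0 : (0:ℝ) < 1 + t := by linarith
      exact_mod_cast (by exact_mod_cast h0.ne' : ((1 + t : ℝ):ℂ) ≠ 0)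
    set c : ℂ := (t : ℂ) / (1 + (t : ℂ)) with hc
    have hcoef : (t : ℂ) - c - (t : ℂ) * c = 0 := by
      rw [hc]
      field_simp
      ring
    have expand : ∀ x y : ℂ, (1 + x • φ) * (1 - y • φ)
        = 1 + (x - y - x * y) • φ := by
      intro x y
      simp only [mul_sub, add_mul, mul_add, sub_mul, one_mul, mul_one,
        smul_mul_assoc, mul_smul_comm, hidem, smul_smul]
      module
    have expand2 : ∀ x y : ℂ, (1 - y • φ) * (1 + x • φ)
        = 1 + (x - y - x * y) • φ := by
      intro x y
      simp only [mul_sub, add_mul, mul_add, sub_mul, one_mul, mul_one,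
        smul_mul_assoc, mul_smul_comm, hidem, smul_smul]
      module
    have key : (1 + (t : ℂ) • φ) * (1 - c • φ) = 1 := by
      rw [expand, hcoef, zero_smul, add_zero]
    have key2 : (1 - c • φ) * (1 + (t : ℂ) • φ) = 1 := by
      rw [expand2, hcoef, zero_smul, add_zero]
    have hinv : Ring.inverse (1 + (t : ℂ) • φ) = 1 - c • φ :=
      Ring.inverse_unit ⟨1 + (t : ℂ) • φ, 1 - c • φ, key, key2⟩
    have h1mc : 1 - c = ((1 / (1 + t) : ℝ) : ℂ) := by
      push_cast
      rw [hc]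
      field_simp
      ring
    have hsub : φ - c • φ = (1 - c) • φ := by module
    rw [qRes, hinv, mul_sub, mul_one, mul_smul_comm, hidem, hsub, h1mc]
  -- complete positivity of nonneg scalar multiples of φ
  have hCP : ∀ c : ℝ, 0 ≤ c → IsCP ((c : ℂ) • φ) := by
    intro c hc m A f
    have hterm : ∀ i j, star (f i) ⬝ᵥ (((c : ℂ) • φ) ((A i)ᴴ * A j) *ᵥ f j)
        = (c : ℂ) * ((star (f i) ⬝ᵥ f j) * ρ ((A i)ᴴ * A j)) := by
      intro i j
      simp only [LinearMap.smul_apply, hφA, smul_smul, Matrix.smul_mulVec,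
        Matrix.one_mulVec, dotProduct_smul, smul_eq_mul]
      ring
    set B : Fin n → MatC n := fun k => ∑ j, f j k • A j with hB
    have hBk : ∀ k, (B k)ᴴ * B k
        = ∑ i, ∑ j, (star (f i k) * f j k) • ((A i)ᴴ * A j) := by
      intro k
      simp only [hB, conjTranspose_sum, conjTranspose_smul, Finset.sum_mul,
        Finset.mul_sum, smul_mul_smul_comm]
      exact Finset.sum_comm
    have hM : ∑ i, ∑ j, (star (f i) ⬝ᵥ f j) • ((A i)ᴴ * A j)
        = ∑ k, (B k)ᴴ * B k := by
      simp only [hBk]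
      conv_rhs => rw [Finset.sum_comm]
      refine Finset.sum_congr rfl fun i _ => ?_
      conv_rhs => rw [Finset.sum_comm]
      refine Finset.sum_congr rfl fun j _ => ?_
      rw [← Finset.sum_smul]
      congr 1
    have hMpsd : (∑ i, ∑ j, (star (f i) ⬝ᵥ f j) • ((A i)ᴴ * A j)).PosSemidef := by
      rw [hM]
      refine Finset.sum_induction _ _ (fun a b ha hb => ha.add hb) ?_ ?_
      · exact Matrix.PosSemidef.zero
      · exact fun k _ => Matrix.posSemidef_conjTranspose_mul_self (B k)
    calc (0:ℂ) ≤ (c : ℂ) * ρ (∑ i, ∑ j, (star (f i) ⬝ᵥ f j) • ((A i)ᴴ * A j)) :=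
          mul_nonneg (by exact_mod_cast Complex.zero_le_real.mpr hc)
            (hpos _ hMpsd)
      _ = ∑ i, ∑ j, star (f i) ⬝ᵥ (((c : ℂ) • φ) ((A i)ᴴ * A j) *ᵥ f j) := by
          simp only [map_sum, _root_.map_smul, Finset.mul_sum, hterm, smul_eq_mul]
  refine ⟨⟨?_, ?_⟩, hres⟩
  · -- no negative eigenvalues
    intro r hr heig
    obtain ⟨v, hv⟩ := heig.exists_hasEigenvector
    have hev := hv.apply_eq_smul
    have h1 : ((r : ℂ) * r) • v = (r : ℂ) • v := by
      calc ((r : ℂ) * r) • v = (r : ℂ) • ((r : ℂ) • v) := by rw [smul_smul]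
        _ = (r : ℂ) • φ v := by rw [hev]
        _ = φ ((r : ℂ) • v) := (_root_.map_smul φ _ _).symm
        _ = φ (φ v) := by rw [hev]
        _ = φ v := by rw [← Module.End.mul_apply, hidem]
        _ = (r : ℂ) • v := hev
    have h3 : (((r : ℂ)) * r - r) • v = 0 := by rw [sub_smul, h1, sub_self]
    have h4 : ((r : ℂ)) * r - r = 0 := by
      rcases smul_eq_zero.mp h3 with h | h
      · exact h
      · exact absurd h hv.2
    have h5 : r * r - r = 0 := by exact_mod_cast h4
    nlinarith
  · intro t ht
    rw [hres t ht]
    exact hCP _ (by positivity)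
end

section
/- For a non-zero positive linear functional τ on Mₙ(ℂ) and non-zero positive C ∈ Mₙ(ℂ), the map ψ(A) = τ(A)C satisfies ψ(I + tψ)⁻¹(A) = τ(A)C / (1 + t·τ(C)) for all t ≥ 0 and A ∈ Mₙ(ℂ); in particular ψ is q-positive. -/
open scoped ComplexOrder BigOperators
open Matrix

/-- For a non-zero positive functional `τ` and non-zero positive `C`, the map
`ψ(A) = τ(A)C` satisfies `ψ(I+tψ)⁻¹(A) = τ(A)C/(1+t·τ(C))`; in particular `ψ` is
q-positive. -/
theorem stmt4 {n : ℕ} (τ : MatC n →ₗ[ℂ] ℂ) (C : MatC n)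
    (hτpos : ∀ A : MatC n, A.PosSemidef → 0 ≤ τ A) (hτne : τ ≠ 0)
    (hC : C.PosSemidef) (hCne : C ≠ 0) :
    (∀ t : ℝ, 0 ≤ t → ∀ A : MatC n,
      qRes (τ.smulRight C) t A = (τ A / (1 + (t : ℂ) * τ C)) • C) ∧
    IsQPos (τ.smulRight C) := by
  set ψ : Module.End ℂ (MatC n) := τ.smulRight C with hψdef
  have hψapp : ∀ A : MatC n, ψ A = τ A • C := fun A => rfl
  have hτC : (0:ℂ) ≤ τ C := hτpos C hC
  set r : ℝ := (τ C).re with hr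
  have hr0 : 0 ≤ r := (Complex.nonneg_iff.mp hτC).1
  have hrC : τ C = (r:ℂ) := Complex.eq_re_of_ofReal_le hτC
  have hsq : ψ * ψ = τ C • ψ := by
    ext A : 1
    simp only [Module.End.mul_apply, hψapp, _root_.map_smul, LinearMap.smul_apply,
      smul_eq_mul, smul_smul]
    ring_nf
  -- the resolvent formula
  have key : ∀ t : ℝ, 0 ≤ t →
      qRes ψ t = ((1 + (t:ℂ) * τ C)⁻¹) • ψ := by
    intro t ht
    set d : ℂ := 1 + (t:ℂ) * τ C with hd_def
    have hdr : d = ((1 + t * r : ℝ) : ℂ) := by rw [hd_def, hrC]; push_cast; ring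
    have hdrpos : (0:ℝ) < 1 + t * r := by positivity
    have hd : d ≠ 0 := by rw [hdr]; exact_mod_cast hdrpos.ne'
    set c : ℂ := (t:ℂ) / d with hc_def
    have hcoef : (t:ℂ) - c - t * (c * τ C) = 0 := by
      have hdd : d * d⁻¹ = 1 := mul_inv_cancel₀ hd
      rw [hc_def, div_eq_mul_inv]
      linear_combination (-(t:ℂ)) * hdd + ((t:ℂ) * d⁻¹) * hd_def
    have expand : ∀ (x y : ℂ), (1 + x • ψ) * (1 - y • ψ) = 1 + (x - y - x * (y * τ C)) • ψ := by
      intro x y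
      simp only [mul_sub, sub_mul, add_mul, mul_one, one_mul, smul_mul_assoc,
        mul_smul_comm, hsq, smul_smul]
      match_scalars <;> ring
    have expand' : ∀ (x y : ℂ), (1 - y • ψ) * (1 + x • ψ) = 1 + (x - y - x * (y * τ C)) • ψ := by
      intro x y
      simp only [mul_sub, sub_mul, add_mul, mul_add, mul_one, one_mul, smul_mul_assoc,
        mul_smul_comm, hsq, smul_smul]
      match_scalars <;> ring
    have hmul1 : (1 + (t:ℂ) • ψ) * (1 - c • ψ) = 1 := by
      rw [expand, hcoef, zero_smul, add_zero]
    have hmul2 : (1 - c • ψ) * (1 + (t:ℂ) • ψ) = 1 := by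
      rw [expand', hcoef, zero_smul, add_zero]
    have hRi : Ring.inverse (1 + (t:ℂ) • ψ) = 1 - c • ψ :=
      Ring.inverse_unit ⟨1 + (t:ℂ) • ψ, 1 - c • ψ, hmul1, hmul2⟩
    have h1 : qRes ψ t = (1 - c * τ C) • ψ := by
      rw [qRes, hRi]
      simp only [mul_sub, mul_one, mul_smul_comm, hsq, smul_smul]
      match_scalars <;> ring
    have h2 : 1 - c * τ C = d⁻¹ := by
      have hdd : d * d⁻¹ = 1 := mul_inv_cancel₀ hd
      rw [hc_def, div_eq_mul_inv]
      linear_combination (-1:ℂ) * hdd + d⁻¹ * hd_def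
    rw [h1, h2]
  have formula : ∀ t : ℝ, 0 ≤ t → ∀ A : MatC n,
      qRes ψ t A = (τ A / (1 + (t:ℂ) * τ C)) • C := by
    intro t ht A
    rw [key t ht]
    simp only [LinearMap.smul_apply, hψapp, smul_smul, div_eq_mul_inv, mul_comm]
  refine ⟨formula, ?_, ?_⟩
  · -- NoNegEig
    intro s hs hev
    obtain ⟨A, hA⟩ := hev.exists_hasEigenvector
    have h1 : τ A • C = (s:ℂ) • A := hA.apply_eq_smul
    have hA0 : A ≠ 0 := hA.right
    by_cases hτA : τ A = 0
    · rw [hτA, zero_smul] at h1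
      have : (s:ℂ) ≠ 0 := by exact_mod_cast hs.ne
      exact hA0 (by simpa [this] using smul_eq_zero.mp h1.symm)
    · have h2 : τ A * τ C = (s:ℂ) * τ A := by
        have := congrArg τ h1
        rwa [_root_.map_smul, _root_.map_smul, smul_eq_mul, smul_eq_mul] at this
      have h3 : τ C = (s:ℂ) := mul_left_cancel₀ hτA (by rw [h2, mul_comm])
      rw [hrC] at h3
      have : r = s := by exact_mod_cast h3
      linarith
  · -- CP of qRes
    intro t ht m A f
    set d : ℂ := 1 + (t:ℂ) * τ C with hd_def
    have hdr : d = ((1 + t * r : ℝ) : ℂ) := by rw [hd_def, hrC]; push_cast; ring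
    have hdrpos : (0:ℝ) < 1 + t * r := by positivity
    have hdinv_nonneg : (0:ℂ) ≤ d⁻¹ := by
      rw [hdr, ← Complex.ofReal_inv]
      exact Complex.zero_le_real.mpr (by positivity)
    obtain ⟨B, hBC⟩ : ∃ B : MatC n, C = Bᴴ * B := by
      open scoped MatrixOrder in
      exact CStarAlgebra.nonneg_iff_eq_star_mul_self.mp hC.nonneg
    have hBB : Bᴴ * B = C := hBC.symm
    have hBH : Bᴴ * B = C := hBC.symm
    set g : Fin m → (Fin n → ℂ) := fun i => B *ᵥ f i with hg
    have claim1 : ∀ i j, star (f i) ⬝ᵥ (C *ᵥ f j) = star (g i) ⬝ᵥ g j := by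
      intro i j
      rw [hg]
      simp only [star_mulVec, dotProduct_mulVec, vecMul_vecMul, hBH, hBB]
    have term_eq : ∀ i j, star (f i) ⬝ᵥ ((qRes ψ t ((A i)ᴴ * A j)) *ᵥ f j)
        = d⁻¹ * ∑ k, star (g i k) * g j k * τ ((A i)ᴴ * A j) := by
      intro i j
      rw [formula t ht, ← hd_def, smul_mulVec, dotProduct_smul, claim1]
      simp only [smul_eq_mul, dotProduct, Pi.star_apply, div_eq_mul_inv, Finset.mul_sum,
        Finset.sum_mul]
      congr 1; ext k; ring
    have claim2 : ∀ k, ∑ i, ∑ j, star (g i k) * g j k * τ ((A i)ᴴ * A j)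
        = τ ((∑ i, g i k • A i)ᴴ * ∑ j, g j k • A j) := by
      intro k
      rw [conjTranspose_sum, Finset.sum_mul_sum]
      rw [map_sum]
      refine Finset.sum_congr rfl fun i _ => ?_
      rw [map_sum]
      refine Finset.sum_congr rfl fun j _ => ?_
      rw [conjTranspose_smul, smul_mul_smul_comm, _root_.map_smul, smul_eq_mul]
    calc (0:ℂ) ≤ d⁻¹ * ∑ k, τ ((∑ i, g i k • A i)ᴴ * ∑ j, g j k • A j) := by
          refine mul_nonneg hdinv_nonneg (Finset.sum_nonneg fun k _ => ?_)
          exact hτpos _ (posSemidef_conjTranspose_mul_self _)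
      _ = ∑ i, ∑ j, star (f i) ⬝ᵥ ((qRes ψ t ((A i)ᴴ * A j)) *ᵥ f j) := by
          simp only [term_eq, ← Finset.mul_sum]
          congr 1
          calc ∑ k, τ ((∑ i, g i k • A i)ᴴ * ∑ j, g j k • A j)
              = ∑ k, ∑ i, ∑ j, star (g i k) * g j k * τ ((A i)ᴴ * A j) :=
                Finset.sum_congr rfl fun k _ => (claim2 k).symm
            _ = ∑ i, ∑ j, ∑ k, star (g i k) * g j k * τ ((A i)ᴴ * A j) := by
                rw [Finset.sum_comm]
                exact Finset.sum_congr rfl fun i _ => Finset.sum_comm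
end

section
/- Let φ: Mₙ(ℂ) → Mₙ(ℂ) be q-positive and U ∈ Mₙ(ℂ) unitary. Define φ_U(A) = U* φ(U A U*) U. Then φ_U is q-positive, and the map β ↦ β_U is an order isomorphism (with respect to ≥_q) between the q-subordinates of φ and the q-subordinates of φ_U. In particular, φ is q-pure if and only if φ_U is q-pure. -/
open scoped ComplexOrder BigOperators
open Matrix

/-- `φ_U(A) = U* φ(U A U*) U`. -/
noncomputable def conjEnd {n : ℕ} (U : MatC n) (φ : Module.End ℂ (MatC n)) :
    Module.End ℂ (MatC n) :=
  ((LinearMap.mulLeft ℂ Uᴴ * LinearMap.mulRight ℂ U : Module.End ℂ (MatC n)) * φ) *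
    (LinearMap.mulLeft ℂ U * LinearMap.mulRight ℂ Uᴴ : Module.End ℂ (MatC n))

section aux
variable {n : ℕ}

lemma ring_inverse_conj {R : Type*} [Ring R] (u : Rˣ) (x : R) :
    Ring.inverse ((u : R) * x * (↑u⁻¹ : R)) = (u : R) * Ring.inverse x * (↑u⁻¹ : R) := by
  by_cases hx : IsUnit x
  · obtain ⟨v, rfl⟩ := hx
    have h : (u : R) * (v : R) * (↑u⁻¹ : R) = ((u * v * u⁻¹ : Rˣ) : R) := by
      simp [Units.val_mul]
    rw [h, Ring.inverse_unit, Ring.inverse_unit]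
    simp [Units.val_mul, mul_assoc]
  · rw [Ring.inverse_non_unit _ hx, Ring.inverse_non_unit, mul_zero, zero_mul]
    intro h
    apply hx
    have h2 : IsUnit ((↑u⁻¹ : R) * ((u : R) * x * (↑u⁻¹ : R)) * (u : R)) :=
      ((u⁻¹.isUnit.mul h).mul u.isUnit)
    simpa [mul_assoc] using h2

lemma conjEnd_apply (U : MatC n) (φ : Module.End ℂ (MatC n)) (A : MatC n) :
    conjEnd U φ A = Uᴴ * (φ (U * A * Uᴴ)) * U := by
  simp [conjEnd, Module.End.mul_apply, LinearMap.mulLeft_apply, LinearMap.mulRight_apply,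
    Matrix.mul_assoc]

lemma unit_h1 {U : MatC n} (hU : U ∈ Matrix.unitaryGroup (Fin n) ℂ) : Uᴴ * U = 1 := by
  have := (Unitary.mem_iff.mp hU).1
  rwa [Matrix.star_eq_conjTranspose] at this

lemma unit_h2 {U : MatC n} (hU : U ∈ Matrix.unitaryGroup (Fin n) ℂ) : U * Uᴴ = 1 := by
  have := (Unitary.mem_iff.mp hU).2
  rwa [Matrix.star_eq_conjTranspose] at this

lemma cLR_mul {U : MatC n} (hU : U ∈ Matrix.unitaryGroup (Fin n) ℂ) :
    ((LinearMap.mulLeft ℂ Uᴴ * LinearMap.mulRight ℂ U : Module.End ℂ (MatC n)) *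
      (LinearMap.mulLeft ℂ U * LinearMap.mulRight ℂ Uᴴ : Module.End ℂ (MatC n))) = 1 := by
  apply LinearMap.ext
  intro A
  have e1 : ∀ X : MatC n, Uᴴ * (U * X) = X := fun X => by
    rw [← Matrix.mul_assoc, unit_h1 hU, Matrix.one_mul]
  simp [Module.End.mul_apply, Matrix.mul_assoc, e1, unit_h1 hU]

lemma cRL_mul {U : MatC n} (hU : U ∈ Matrix.unitaryGroup (Fin n) ℂ) :
    ((LinearMap.mulLeft ℂ U * LinearMap.mulRight ℂ Uᴴ : Module.End ℂ (MatC n)) *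
      (LinearMap.mulLeft ℂ Uᴴ * LinearMap.mulRight ℂ U : Module.End ℂ (MatC n))) = 1 := by
  apply LinearMap.ext
  intro A
  have e2 : ∀ X : MatC n, U * (Uᴴ * X) = X := fun X => by
    rw [← Matrix.mul_assoc, unit_h2 hU, Matrix.one_mul]
  simp [Module.End.mul_apply, Matrix.mul_assoc, e2, unit_h2 hU]

/-- The unit of conjugation. -/
noncomputable def cUnit {U : MatC n} (hU : U ∈ Matrix.unitaryGroup (Fin n) ℂ) :
    (Module.End ℂ (MatC n))ˣ :=
  ⟨(LinearMap.mulLeft ℂ Uᴴ * LinearMap.mulRight ℂ U : Module.End ℂ (MatC n)),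
   (LinearMap.mulLeft ℂ U * LinearMap.mulRight ℂ Uᴴ : Module.End ℂ (MatC n)),
   cLR_mul hU, cRL_mul hU⟩

lemma conjEnd_eq_unit {U : MatC n} (hU : U ∈ Matrix.unitaryGroup (Fin n) ℂ)
    (φ : Module.End ℂ (MatC n)) :
    conjEnd U φ = ((cUnit hU : (Module.End ℂ (MatC n))ˣ) : Module.End ℂ (MatC n)) * φ *
      ((cUnit hU)⁻¹ : (Module.End ℂ (MatC n))ˣ) := rfl

lemma qRes_conjEnd {U : MatC n} (hU : U ∈ Matrix.unitaryGroup (Fin n) ℂ)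
    (φ : Module.End ℂ (MatC n)) (t : ℝ) :
    qRes (conjEnd U φ) t = conjEnd U (qRes φ t) := by
  set u := cUnit hU with hu
  have key : (1 : Module.End ℂ (MatC n)) + (t : ℂ) • conjEnd U φ =
      (u : Module.End ℂ (MatC n)) * (1 + (t : ℂ) • φ) * (↑u⁻¹ : Module.End ℂ (MatC n)) := by
    rw [conjEnd_eq_unit hU, mul_add, add_mul, mul_one]
    congr 1
    · rw [← Units.val_mul, mul_inv_cancel, Units.val_one]
    · rw [mul_smul_comm, smul_mul_assoc]
  have hc : (↑u⁻¹ : Module.End ℂ (MatC n)) * (u : Module.End ℂ (MatC n)) = 1 := by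
    rw [← Units.val_mul, inv_mul_cancel, Units.val_one]
  rw [qRes, key, ring_inverse_conj u, conjEnd_eq_unit hU φ, qRes, conjEnd_eq_unit hU]
  calc (u : Module.End ℂ (MatC n)) * φ * ↑u⁻¹ *
        ((u : Module.End ℂ (MatC n)) * Ring.inverse (1 + (t:ℂ) • φ) * ↑u⁻¹)
      = (u : Module.End ℂ (MatC n)) * φ *
        ((↑u⁻¹ * ↑u) * (Ring.inverse (1 + (t:ℂ) • φ) * ↑u⁻¹)) := by
        simp [mul_assoc]
    _ = (u : Module.End ℂ (MatC n)) * (φ * Ring.inverse (1 + (t:ℂ) • φ)) * ↑u⁻¹ := by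
        rw [hc, one_mul]; simp [mul_assoc]
    _ = _ := rfl

lemma isCP_conj (U : MatC n) (ψ : Module.End ℂ (MatC n)) (h : IsCP ψ) :
    IsCP (conjEnd U ψ) := by
  intro m A f
  have key := h m (fun i => A i * Uᴴ) (fun j => U *ᵥ f j)
  refine le_of_le_of_eq key (Finset.sum_congr rfl fun i _ => Finset.sum_congr rfl fun j _ => ?_)
  rw [conjEnd_apply]
  have hB : (A i * Uᴴ)ᴴ * (A j * Uᴴ) = U * ((A i)ᴴ * A j) * Uᴴ := by
    simp [Matrix.conjTranspose_mul, Matrix.mul_assoc]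
  rw [hB]
  rw [show (Uᴴ * (ψ (U * ((A i)ᴴ * A j) * Uᴴ)) * U) *ᵥ f j =
      Uᴴ *ᵥ ((ψ (U * ((A i)ᴴ * A j) * Uᴴ)) *ᵥ (U *ᵥ f j)) by
    simp [Matrix.mulVec_mulVec, Matrix.mul_assoc]]
  rw [Matrix.dotProduct_mulVec (star (f i)) Uᴴ, ← Matrix.star_mulVec]

lemma conjEnd_conjEnd {U : MatC n} (hU : U ∈ Matrix.unitaryGroup (Fin n) ℂ)
    (φ : Module.End ℂ (MatC n)) :
    conjEnd Uᴴ (conjEnd U φ) = φ := by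
  have e2 : ∀ X : MatC n, U * (Uᴴ * X) = X := fun X => by
    rw [← Matrix.mul_assoc, unit_h2 hU, Matrix.one_mul]
  apply LinearMap.ext
  intro A
  rw [conjEnd_apply, conjEnd_apply, Matrix.conjTranspose_conjTranspose]
  rw [show U * (Uᴴ * A * U) * Uᴴ = A by simp [Matrix.mul_assoc, e2, unit_h2 hU]]
  simp [Matrix.mul_assoc, e2, unit_h2 hU]

lemma hUstar {U : MatC n} (hU : U ∈ Matrix.unitaryGroup (Fin n) ℂ) :
    Uᴴ ∈ Matrix.unitaryGroup (Fin n) ℂ := by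
  have := Unitary.star_mem hU
  rwa [Matrix.star_eq_conjTranspose] at this

lemma isCP_conjEnd_iff {U : MatC n} (hU : U ∈ Matrix.unitaryGroup (Fin n) ℂ)
    (ψ : Module.End ℂ (MatC n)) :
    IsCP (conjEnd U ψ) ↔ IsCP ψ := by
  constructor
  · intro h
    have := isCP_conj Uᴴ _ h
    rwa [conjEnd_conjEnd hU] at this
  · exact isCP_conj U ψ

lemma noNegEig_conj {U : MatC n} (hU : U ∈ Matrix.unitaryGroup (Fin n) ℂ)
    (φ : Module.End ℂ (MatC n)) (h : NoNegEig φ) :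
    NoNegEig (conjEnd U φ) := by
  intro r hr he
  apply h r hr
  obtain ⟨v, hv⟩ := he.exists_hasEigenvector
  obtain ⟨hv1, hv2⟩ := Module.End.hasEigenvector_iff.mp hv
  rw [Module.End.mem_eigenspace_iff] at hv1
  set u := cUnit hU with hu
  set w := (↑u⁻¹ : Module.End ℂ (MatC n)) v with hw
  have hw0 : w ≠ 0 := by
    intro h0
    apply hv2
    have huw : (u : Module.End ℂ (MatC n)) w = (u : Module.End ℂ (MatC n)) 0 := by rw [h0]
    rw [hw, ← Module.End.mul_apply, ← Units.val_mul, mul_inv_cancel] at huw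
    simpa using huw
  rw [conjEnd_eq_unit hU] at hv1
  simp only [Module.End.mul_apply] at hv1
  have h3 : (↑u : Module.End ℂ (MatC n)) (φ w) = (r : ℂ) • v := by
    rw [hw]; exact hv1
  have h4 := congrArg (fun x => (↑u⁻¹ : Module.End ℂ (MatC n)) x) h3
  have h5 : (↑u⁻¹ : Module.End ℂ (MatC n)) ((↑u : Module.End ℂ (MatC n)) (φ w)) = φ w := by
    rw [← Module.End.mul_apply, ← Units.val_mul, inv_mul_cancel, Units.val_one,
      Module.End.one_apply]
  rw [h5] at h4
  have h6 : φ w = (r : ℂ) • w := by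
    rw [h4, hw]; exact _root_.map_smul _ _ _
  exact Module.End.hasEigenvalue_of_hasEigenvector
    (Module.End.hasEigenvector_iff.mpr ⟨Module.End.mem_eigenspace_iff.mpr h6, hw0⟩)

lemma noNegEig_conjEnd_iff {U : MatC n} (hU : U ∈ Matrix.unitaryGroup (Fin n) ℂ)
    (φ : Module.End ℂ (MatC n)) :
    NoNegEig (conjEnd U φ) ↔ NoNegEig φ := by
  constructor
  · intro h
    have := noNegEig_conj (hUstar hU) _ h
    rwa [conjEnd_conjEnd hU] at this
  · exact noNegEig_conj hU φ

lemma isQPos_conjEnd_iff {U : MatC n} (hU : U ∈ Matrix.unitaryGroup (Fin n) ℂ)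
    (φ : Module.End ℂ (MatC n)) :
    IsQPos (conjEnd U φ) ↔ IsQPos φ := by
  unfold IsQPos
  rw [noNegEig_conjEnd_iff hU]
  refine and_congr Iff.rfl (forall_congr' fun t => imp_congr Iff.rfl ?_)
  rw [qRes_conjEnd hU, isCP_conjEnd_iff hU]

lemma conjEnd_sub (U : MatC n) (φ ψ : Module.End ℂ (MatC n)) :
    conjEnd U (φ - ψ) = conjEnd U φ - conjEnd U ψ := by
  simp only [conjEnd, mul_sub, sub_mul]

lemma conjEnd_zero (U : MatC n) : conjEnd U (0 : Module.End ℂ (MatC n)) = 0 := by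
  simp [conjEnd]

lemma qLE_conjEnd_iff {U : MatC n} (hU : U ∈ Matrix.unitaryGroup (Fin n) ℂ)
    (ψ φ : Module.End ℂ (MatC n)) :
    qLE (conjEnd U ψ) (conjEnd U φ) ↔ qLE ψ φ := by
  unfold qLE
  refine forall_congr' fun t => imp_congr Iff.rfl ?_
  rw [qRes_conjEnd hU, qRes_conjEnd hU, ← conjEnd_sub, isCP_conjEnd_iff hU]

lemma isQPure_conj {U : MatC n} (hU : U ∈ Matrix.unitaryGroup (Fin n) ℂ)
    (φ : Module.End ℂ (MatC n)) (h : IsQPure φ) :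
    IsQPure (conjEnd U φ) := by
  refine ⟨(isQPos_conjEnd_iff hU φ).mpr h.1, fun ψ => ?_⟩
  have hψ : ψ = conjEnd U (conjEnd Uᴴ ψ) := by
    conv_lhs => rw [← conjEnd_conjEnd (hUstar hU) ψ, Matrix.conjTranspose_conjTranspose]
  set β := conjEnd Uᴴ ψ with hβ
  rw [hψ, isQPos_conjEnd_iff hU, qLE_conjEnd_iff hU, h.2 β]
  constructor
  · rintro (h0 | ⟨s, hs, hqs⟩)
    · left; rw [h0, conjEnd_zero]
    · right; exact ⟨s, hs, by rw [hqs, qRes_conjEnd hU]⟩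
  · rintro (h0 | ⟨s, hs, hqs⟩)
    · left
      have := congrArg (conjEnd Uᴴ) h0
      rwa [conjEnd_conjEnd hU, conjEnd_zero] at this
    · right
      refine ⟨s, hs, ?_⟩
      have := congrArg (conjEnd Uᴴ) hqs
      rwa [conjEnd_conjEnd hU, qRes_conjEnd hU, conjEnd_conjEnd hU] at this

end aux

/-- For q-positive `φ` and unitary `U`, `φ_U` is q-positive, `β ↦ β_U` is an order
isomorphism between q-subordinates of `φ` and of `φ_U`, and `φ` is q-pure iff `φ_U` is. -/
theorem stmt6 {n : ℕ} (φ : Module.End ℂ (MatC n)) (hφ : IsQPos φ)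
    (U : MatC n) (hU : U ∈ Matrix.unitaryGroup (Fin n) ℂ) :
    IsQPos (conjEnd U φ) ∧
    (∀ β : Module.End ℂ (MatC n),
      (IsQPos β ∧ qLE β φ) ↔ (IsQPos (conjEnd U β) ∧ qLE (conjEnd U β) (conjEnd U φ))) ∧
    (∀ β γ : Module.End ℂ (MatC n), IsQPos β → qLE β φ → IsQPos γ → qLE γ φ →
      (qLE γ β ↔ qLE (conjEnd U γ) (conjEnd U β))) ∧
    (IsQPure φ ↔ IsQPure (conjEnd U φ)) := by
  refine ⟨(isQPos_conjEnd_iff hU φ).mpr hφ, fun β => ?_, fun β γ _ _ _ _ => ?_, ?_⟩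
  · exact (and_congr (isQPos_conjEnd_iff hU β) (qLE_conjEnd_iff hU β φ)).symm
  · exact (qLE_conjEnd_iff hU γ β).symm
  · constructor
    · exact isQPure_conj hU φ
    · intro h
      have := isQPure_conj (hUstar hU) _ h
      rwa [conjEnd_conjEnd hU] at this
end

section
/- If φ: Mₙ(ℂ) → Mₙ(ℂ) is an invertible unital q-positive map, then φ⁻¹ is conditionally negative. -/
open scoped ComplexOrder BigOperators
open Matrix

/-- `ψ` is self-adjoint as a map: `ψ(A*) = ψ(A)*`. -/
def SelfAdjMap {n : ℕ} (ψ : Module.End ℂ (MatC n)) : Prop := ∀ A : MatC n, ψ Aᴴ = (ψ A)ᴴ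

/-- Conditionally negative map on `Mₙ(ℂ)`. -/
def IsCondNeg {n : ℕ} (ψ : Module.End ℂ (MatC n)) : Prop :=
  SelfAdjMap ψ ∧
  ∀ (m : ℕ) (A : Fin m → MatC n) (f : Fin m → (Fin n → ℂ)),
    (∑ i, (A i) *ᵥ f i) = 0 →
    ∑ i, ∑ j, star (f i) ⬝ᵥ ((ψ ((A i)ᴴ * A j)) *ᵥ f j) ≤ 0

section Stmt8Aux

attribute [local instance] Matrix.normedAddCommGroup Matrix.normedSpace

variable {n : ℕ}

noncomputable local instance matTop : TopologicalSpace (MatC n) :=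
  (Matrix.normedAddCommGroup : NormedAddCommGroup (MatC n)).toUniformSpace.toTopologicalSpace

private lemma ringInv_eq {M : Type*} [MonoidWithZero M] {a b : M}
    (h1 : a * b = 1) (h2 : b * a = 1) : Ring.inverse a = b := by
  have ha : a = ((⟨a, b, h1, h2⟩ : Mˣ) : M) := rfl
  rw [ha, Ring.inverse_unit]
  rfl

private lemma im_eq_zero_of_nonneg {z : ℂ} (h : 0 ≤ z) : z.im = 0 :=
  (Complex.le_def.mp h).2.symm

private lemma dot_sum_right {m : ℕ} (u : Fin n → ℂ) (v : Fin m → Fin n → ℂ) :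
    u ⬝ᵥ (∑ j, v j) = ∑ j, u ⬝ᵥ v j := by
  simp only [dotProduct, Finset.sum_apply, Finset.mul_sum]
  exact Finset.sum_comm

private lemma matrix_ext_of_dot {M N : MatC n}
    (h : ∀ f g : Fin n → ℂ, star g ⬝ᵥ (M *ᵥ f) = star g ⬝ᵥ (N *ᵥ f)) : M = N := by
  ext i j
  have hs : star ((Pi.single i (1 : ℂ)) : Fin n → ℂ) = Pi.single i (1 : ℂ) := by
    funext k
    rw [Pi.star_apply]
    rcases eq_or_ne k i with rfl | hk
    · simp
    · simp [Pi.single_eq_of_ne hk]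
  have := h (Pi.single j 1) (Pi.single i 1)
  rw [hs] at this
  simpa [Matrix.mulVec_single, single_dotProduct] using this

private lemma conj_dot (M : MatC n) (f g : Fin n → ℂ) :
    star (star f ⬝ᵥ (M *ᵥ g)) = star g ⬝ᵥ (Mᴴ *ᵥ f) := by
  rw [Matrix.star_dotProduct, star_star, Matrix.star_mulVec, ← Matrix.dotProduct_mulVec]

private lemma cp_diag {φ : Module.End ℂ (MatC n)} (hCP : IsCP φ) (A : MatC n)
    (f : Fin n → ℂ) : 0 ≤ star f ⬝ᵥ (φ (Aᴴ * A) *ᵥ f) := by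
  have := hCP 1 ![A] ![f]
  simpa using this

private lemma cp_selfadj {φ : Module.End ℂ (MatC n)} (hCP : IsCP φ) : SelfAdjMap φ := by
  have key : ∀ A B : MatC n, φ (Bᴴ * A) = (φ (Aᴴ * B))ᴴ := by
    intro A B
    have him : ∀ f g : Fin n → ℂ,
        (star f ⬝ᵥ (φ (Aᴴ * B) *ᵥ g)).im + (star g ⬝ᵥ (φ (Bᴴ * A) *ᵥ f)).im = 0 := by
      intro f g
      have h2 := hCP 2 ![A, B] ![f, g]
      simp only [Fin.sum_univ_two, Matrix.cons_val_zero, Matrix.cons_val_one,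
        Matrix.head_cons] at h2
      have hall := im_eq_zero_of_nonneg h2
      have hp := im_eq_zero_of_nonneg (cp_diag hCP A f)
      have hq := im_eq_zero_of_nonneg (cp_diag hCP B g)
      simp only [Complex.add_im] at hall
      linarith
    apply matrix_ext_of_dot
    intro f g
    rw [← conj_dot]
    have h1 := him f g
    have h2 := him f (Complex.I • g)
    have e1 : star f ⬝ᵥ (φ (Aᴴ * B) *ᵥ (Complex.I • g))
        = Complex.I * (star f ⬝ᵥ (φ (Aᴴ * B) *ᵥ g)) := by
      rw [Matrix.mulVec_smul, dotProduct_smul, smul_eq_mul]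
    have e2 : star (Complex.I • g) ⬝ᵥ (φ (Bᴴ * A) *ᵥ f)
        = -Complex.I * (star g ⬝ᵥ (φ (Bᴴ * A) *ᵥ f)) := by
      rw [star_smul, smul_dotProduct, smul_eq_mul, Complex.star_def, Complex.conj_I]
    rw [e1, e2] at h2
    set z := star f ⬝ᵥ (φ (Aᴴ * B) *ᵥ g) with hz
    set w := star g ⬝ᵥ (φ (Bᴴ * A) *ᵥ f) with hw
    have hre : z.re - w.re = 0 := by
      have : (Complex.I * z).im + (-Complex.I * w).im = 0 := h2
      simp only [Complex.mul_im, Complex.I_re, Complex.I_im, Complex.neg_re,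
        Complex.neg_im] at this
      linarith
    apply Complex.ext
    · simp only [Complex.star_def, Complex.conj_re]
      linarith
    · simp only [Complex.star_def, Complex.conj_im]
      linarith
  intro A
  have h := key A 1
  simp only [Matrix.conjTranspose_one, Matrix.one_mul, Matrix.mul_one] at h
  rw [h, Matrix.conjTranspose_conjTranspose]

private lemma unit_one_add {φ : Module.End ℂ (MatC n)} (hne : NoNegEig φ)
    {t : ℝ} (ht : 0 ≤ t) : IsUnit ((1 : Module.End ℂ (MatC n)) + (t : ℂ) • φ) := by
  rcases eq_or_lt_of_le ht with h0 | hpos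
  · simp [← h0]
  · rw [Module.End.isUnit_iff]
    have ht0 : (t : ℂ) ≠ 0 := by
      exact_mod_cast ne_of_gt hpos
    have hinj : Function.Injective ((1 : Module.End ℂ (MatC n)) + (t : ℂ) • φ) := by
      intro x y hxy
      by_contra hne'
      have hx : x - y ≠ 0 := sub_ne_zero.mpr hne'
      have h0 : x - y + (t : ℂ) • φ (x - y) = 0 := by
        have : ((1 : Module.End ℂ (MatC n)) + (t : ℂ) • φ) (x - y) = 0 := by
          rw [map_sub, hxy, sub_self]
        simpa [LinearMap.add_apply, LinearMap.smul_apply] using this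
      have h2 : (t : ℂ) • φ (x - y) = -(x - y) := by
        rw [add_comm] at h0
        exact add_eq_zero_iff_eq_neg.mp h0
      have hev : φ (x - y) = (-(t : ℂ)⁻¹) • (x - y) := by
        have h3 : (t : ℂ)⁻¹ • ((t : ℂ) • φ (x - y)) = (t : ℂ)⁻¹ • (-(x - y)) := by
          rw [h2]
        rw [smul_smul, inv_mul_cancel₀ ht0, one_smul] at h3
        rw [h3, smul_neg, neg_smul]
      have heig : Module.End.HasEigenvalue φ (((-t⁻¹ : ℝ) : ℂ)) := by
        apply Module.End.hasEigenvalue_of_hasEigenvector (x := x - y)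
        refine ⟨Module.End.mem_eigenspace_iff.mpr ?_, hx⟩
        rw [hev]
        norm_num
      exact hne (-t⁻¹) (by simp [inv_pos.mpr hpos]) heig
    exact ⟨hinj, LinearMap.injective_iff_surjective.mp hinj⟩

variable {φ ψ : Module.End ℂ (MatC n)}

private lemma psi_mul_u (h2 : ψ * φ = 1) (c : ℂ) :
    ψ * ((1 : Module.End ℂ (MatC n)) + c • φ) = ψ + c • 1 := by
  rw [mul_add, mul_one, mul_smul_comm, h2]

private lemma u_mul_psi (h1 : φ * ψ = 1) (c : ℂ) :
    ((1 : Module.End ℂ (MatC n)) + c • φ) * ψ = ψ + c • 1 := by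
  rw [add_mul, one_mul, smul_mul_assoc, h1]

private lemma psi_formula (h1 : φ * ψ = 1) (h2 : ψ * φ = 1) (c : ℂ)
    (hu : IsUnit ((1 : Module.End ℂ (MatC n)) + c • φ)) :
    ψ = ψ * Ring.inverse (1 + c • φ) + c • 1
        - (c * c) • (φ * Ring.inverse (1 + c • φ)) := by
  set u : Module.End ℂ (MatC n) := 1 + c • φ with hu_def
  set iu := Ring.inverse u with hiu
  have hiu1 : u * iu = 1 := Ring.mul_inverse_cancel u hu
  have hdecomp : ψ = ψ * iu + c • iu := by
    conv_lhs => rw [← mul_one ψ, ← hiu1, ← mul_assoc, psi_mul_u h2 c]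
    rw [add_mul, smul_mul_assoc, one_mul]
  have hinvd : iu = 1 - c • (φ * iu) := by
    have h : iu + c • (φ * iu) = 1 := by
      have h0 := hiu1
      rw [hu_def, add_mul, one_mul, smul_mul_assoc] at h0
      exact h0
    exact eq_sub_of_add_eq h
  calc ψ = ψ * iu + c • iu := hdecomp
    _ = ψ * iu + c • (1 - c • (φ * iu)) := by rw [← hinvd]
    _ = ψ * iu + c • 1 - (c * c) • (φ * iu) := by
        rw [smul_sub, smul_smul]
        abel

private lemma unit_aux (h1 : φ * ψ = 1) (h2 : ψ * φ = 1) {c : ℂ} (hc : c ≠ 0)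
    (hu : IsUnit ((1 : Module.End ℂ (MatC n)) + c • φ)) :
    IsUnit ((1 : Module.End ℂ (MatC n)) + c⁻¹ • ψ) := by
  have key : (1 : Module.End ℂ (MatC n)) + c⁻¹ • ψ
      = c⁻¹ • (ψ * (1 + c • φ)) := by
    rw [psi_mul_u h2 c, smul_add, smul_smul, inv_mul_cancel₀ hc, one_smul, add_comm]
  rw [key, Algebra.smul_def]
  exact (((isUnit_iff_ne_zero.mpr (inv_ne_zero hc)).map (algebraMap ℂ (Module.End ℂ (MatC n)))).mul
    (IsUnit.mul (⟨⟨ψ, φ, h2, h1⟩, rfl⟩ : IsUnit ψ) hu))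

private lemma inv_formula (h1 : φ * ψ = 1) (h2 : ψ * φ = 1) {c : ℂ} (hc : c ≠ 0)
    (hu : IsUnit ((1 : Module.End ℂ (MatC n)) + c • φ)) :
    Ring.inverse ((1 : Module.End ℂ (MatC n)) + c • φ)
      = c⁻¹ • (ψ * Ring.inverse (1 + c⁻¹ • ψ)) := by
  have hw := unit_aux h1 h2 hc hu
  set w := Ring.inverse ((1 : Module.End ℂ (MatC n)) + c⁻¹ • ψ) with hw_def
  have hkey1 : ψ + c • 1 = c • ((1 : Module.End ℂ (MatC n)) + c⁻¹ • ψ) := by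
    rw [smul_add, smul_smul, mul_inv_cancel₀ hc, one_smul, add_comm]
  have huv : ((1 : Module.End ℂ (MatC n)) + c • φ) * (c⁻¹ • (ψ * w)) = 1 := by
    calc ((1 : Module.End ℂ (MatC n)) + c • φ) * (c⁻¹ • (ψ * w))
        = c⁻¹ • ((((1 : Module.End ℂ (MatC n)) + c • φ) * ψ) * w) := by
          rw [mul_smul_comm, mul_assoc]
      _ = c⁻¹ • ((c • ((1 : Module.End ℂ (MatC n)) + c⁻¹ • ψ)) * w) := by
          rw [u_mul_psi h1 c, hkey1]
      _ = c⁻¹ • (c • (((1 : Module.End ℂ (MatC n)) + c⁻¹ • ψ) * w)) := by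
          rw [smul_mul_assoc]
      _ = 1 := by
          rw [Ring.mul_inverse_cancel _ hw, smul_smul, inv_mul_cancel₀ hc, one_smul]
  have hkey2 : (1 : Module.End ℂ (MatC n)) + c • φ
      = c • (((1 : Module.End ℂ (MatC n)) + c⁻¹ • ψ) * φ) := by
    rw [add_mul, one_mul, smul_mul_assoc, h2, smul_add, smul_smul, mul_inv_cancel₀ hc,
      one_smul, add_comm]
  have hvu : (c⁻¹ • (ψ * w)) * ((1 : Module.End ℂ (MatC n)) + c • φ) = 1 := by
    calc (c⁻¹ • (ψ * w)) * ((1 : Module.End ℂ (MatC n)) + c • φ)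
        = c⁻¹ • (ψ * (w * ((1 : Module.End ℂ (MatC n)) + c • φ))) := by
          rw [smul_mul_assoc, mul_assoc]
      _ = c⁻¹ • (ψ * (w * (c • (((1 : Module.End ℂ (MatC n)) + c⁻¹ • ψ) * φ)))) := by
          rw [← hkey2]
      _ = c⁻¹ • (ψ * (c • ((w * ((1 : Module.End ℂ (MatC n)) + c⁻¹ • ψ)) * φ))) := by
          rw [mul_smul_comm, mul_assoc]
      _ = c⁻¹ • (ψ * (c • φ)) := by
          rw [Ring.inverse_mul_cancel _ hw, one_mul]
      _ = 1 := by
          rw [mul_smul_comm, h2, smul_smul, inv_mul_cancel₀ hc, one_smul]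
  exact ringInv_eq huv hvu

noncomputable def toCLM (χ : Module.End ℂ (MatC n)) : MatC n →L[ℂ] MatC n :=
  LinearMap.toContinuousLinearMap χ

private lemma toCLM_apply (χ : Module.End ℂ (MatC n)) (x : MatC n) : toCLM χ x = χ x := rfl

private lemma toCLM_mul (a b : Module.End ℂ (MatC n)) : toCLM (a * b) = toCLM a * toCLM b := by
  ext x
  rfl

private lemma toCLM_one : toCLM (1 : Module.End ℂ (MatC n)) = 1 := by
  ext x
  rfl

private lemma toCLM_smul (c : ℂ) (a : Module.End ℂ (MatC n)) :
    toCLM (c • a) = c • toCLM a := by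
  ext x
  rfl

private lemma toCLM_add (a b : Module.End ℂ (MatC n)) :
    toCLM (a + b) = toCLM a + toCLM b := by
  ext x
  rfl

private lemma toCLM_inverse {a : Module.End ℂ (MatC n)} (ha : IsUnit a) :
    toCLM (Ring.inverse a) = Ring.inverse (toCLM a) := by
  refine (ringInv_eq ?_ ?_).symm
  · rw [← toCLM_mul, Ring.mul_inverse_cancel _ ha, toCLM_one]
  · rw [← toCLM_mul, Ring.inverse_mul_cancel _ ha, toCLM_one]

set_option synthInstance.maxHeartbeats 400000 in
private lemma tendsto_inv_u (h1 : φ * ψ = 1) (h2 : ψ * φ = 1) (hne : NoNegEig φ) :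
    Filter.Tendsto (fun t : ℝ => toCLM (Ring.inverse (1 + (t : ℂ) • φ)))
      Filter.atTop (nhds 0) := by
  set Ψ : MatC n →L[ℂ] MatC n := toCLM ψ with hΨ
  have hcont : ContinuousAt
      (fun x : ℝ => ((x : ℂ)) • (Ψ * Ring.inverse (1 + (x : ℂ) • Ψ))) 0 := by
    have hc1 : Continuous (fun x : ℝ => ((x : ℂ))) := Complex.continuous_ofReal
    have hc2 : Continuous (fun x : ℝ => (1 + (x : ℂ) • Ψ)) := by
      exact continuous_const.add (hc1.smul continuous_const)
    have hc3 : ContinuousAt (Ring.inverse : (MatC n →L[ℂ] MatC n) → _)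
        ((1 : MatC n →L[ℂ] MatC n)) := by
      simpa using NormedRing.inverse_continuousAt (1 : (MatC n →L[ℂ] MatC n)ˣ)
    have hc4 : ContinuousAt (fun x : ℝ => Ring.inverse (1 + (x : ℂ) • Ψ)) 0 := by
      have h6 : (1 : MatC n →L[ℂ] MatC n) + ((0 : ℝ) : ℂ) • Ψ = 1 := by
        rw [Complex.ofReal_zero, show ((0 : ℂ) • Ψ) = 0 from zero_smul ℂ Ψ, add_zero]
      have h5 := ContinuousAt.comp (x := (0 : ℝ))
        (g := (Ring.inverse : (MatC n →L[ℂ] MatC n) → (MatC n →L[ℂ] MatC n)))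
        (by rw [h6]; exact hc3) hc2.continuousAt
      exact h5
    exact (hc1.continuousAt.smul (continuousAt_const.mul hc4))
  have h0 : ((0 : ℝ) : ℂ) • (Ψ * Ring.inverse (1 + ((0 : ℝ) : ℂ) • Ψ)) = 0 := by
    rw [Complex.ofReal_zero]
    exact zero_smul ℂ (Ψ * Ring.inverse (1 + (0 : ℂ) • Ψ))
  have htend : Filter.Tendsto
      (fun t : ℝ => ((t⁻¹ : ℝ) : ℂ) • (Ψ * Ring.inverse (1 + ((t⁻¹ : ℝ) : ℂ) • Ψ)))
      Filter.atTop (nhds 0) := by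
    have h := hcont.tendsto
    rw [h0] at h
    exact h.comp tendsto_inv_atTop_zero
  apply htend.congr'
  filter_upwards [Filter.eventually_ge_atTop (1 : ℝ)] with t ht
  have htpos : (0 : ℝ) < t := lt_of_lt_of_le one_pos ht
  have hc0 : (t : ℂ) ≠ 0 := by exact_mod_cast ne_of_gt htpos
  have hu := unit_one_add hne (le_of_lt htpos)
  have hw := unit_aux h1 h2 hc0 hu
  rw [inv_formula h1 h2 hc0 hu, toCLM_smul, toCLM_mul, toCLM_inverse hw, toCLM_add,
    toCLM_one, toCLM_smul]
  push_cast
  rfl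

private lemma dot_norm_le (M : MatC n) (a b : Fin n → ℂ) :
    ‖star a ⬝ᵥ (M *ᵥ b)‖ ≤ ‖M‖ * ((∑ p, ‖a p‖) * (∑ q, ‖b q‖)) := by
  have hdef : star a ⬝ᵥ (M *ᵥ b) = ∑ p, ∑ q, star (a p) * (M p q * b q) := by
    simp [dotProduct, Matrix.mulVec, Finset.mul_sum]
  rw [hdef]
  calc ‖∑ p, ∑ q, star (a p) * (M p q * b q)‖
      ≤ ∑ p, ‖∑ q, star (a p) * (M p q * b q)‖ := norm_sum_le _ _
    _ ≤ ∑ p, ∑ q, ‖star (a p) * (M p q * b q)‖ :=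
        Finset.sum_le_sum fun p _ => norm_sum_le _ _
    _ ≤ ∑ p, ∑ q, ‖a p‖ * (‖M‖ * ‖b q‖) := by
        refine Finset.sum_le_sum fun p _ => Finset.sum_le_sum fun q _ => ?_
        rw [norm_mul, norm_mul, norm_star]
        have hM : ‖M p q‖ ≤ ‖M‖ := Matrix.norm_entry_le_entrywise_sup_norm M
        gcongr
    _ = ‖M‖ * ((∑ p, ‖a p‖) * (∑ q, ‖b q‖)) := by
        rw [Finset.sum_mul, Finset.mul_sum]
        refine Finset.sum_congr rfl fun p _ => ?_
        rw [Finset.mul_sum, Finset.mul_sum]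
        refine Finset.sum_congr rfl fun q _ => ?_
        ring

private lemma main_ineq (h1 : φ * ψ = 1) (h2 : ψ * φ = 1) (hq : IsQPos φ)
    (m : ℕ) (A : Fin m → MatC n) (f : Fin m → (Fin n → ℂ))
    (hsum : (∑ i, (A i) *ᵥ f i) = 0) :
    ∑ i, ∑ j, star (f i) ⬝ᵥ ((ψ ((A i)ᴴ * A j)) *ᵥ f j) ≤ 0 := by
  classical
  set Q : Module.End ℂ (MatC n) → ℂ :=
    fun χ => ∑ i, ∑ j, star (f i) ⬝ᵥ ((χ ((A i)ᴴ * A j)) *ᵥ f j) with hQdef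
  show Q ψ ≤ 0
  have hQadd : ∀ a b : Module.End ℂ (MatC n), Q (a + b) = Q a + Q b := by
    intro a b
    simp only [hQdef, LinearMap.add_apply, Matrix.add_mulVec, dotProduct_add]
    rw [← Finset.sum_add_distrib]
    exact Finset.sum_congr rfl fun i _ => Finset.sum_add_distrib
  have hQsub : ∀ a b : Module.End ℂ (MatC n), Q (a - b) = Q a - Q b := by
    intro a b
    simp only [hQdef, LinearMap.sub_apply, Matrix.sub_mulVec, dotProduct_sub]
    rw [← Finset.sum_sub_distrib]
    exact Finset.sum_congr rfl fun i _ => Finset.sum_sub_distrib _ _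
  have hQsmul : ∀ (c : ℂ) (a : Module.End ℂ (MatC n)), Q (c • a) = c * Q a := by
    intro c a
    simp only [hQdef, LinearMap.smul_apply, Matrix.smul_mulVec, dotProduct_smul,
      smul_eq_mul]
    rw [Finset.mul_sum]
    exact Finset.sum_congr rfl fun i _ => (Finset.mul_sum _ _ _).symm
  have hQ1 : Q (1 : Module.End ℂ (MatC n)) = 0 := by
    have hterm : ∀ i j, star (f i) ⬝ᵥ (((A i)ᴴ * A j) *ᵥ f j)
        = star (A i *ᵥ f i) ⬝ᵥ (A j *ᵥ f j) := by
      intro i j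
      rw [← Matrix.mulVec_mulVec, Matrix.dotProduct_mulVec, ← Matrix.star_mulVec]
    have : Q (1 : Module.End ℂ (MatC n))
        = ∑ i, star (A i *ᵥ f i) ⬝ᵥ (∑ j, A j *ᵥ f j) := by
      simp only [hQdef, Module.End.one_apply]
      refine Finset.sum_congr rfl fun i _ => ?_
      rw [dot_sum_right]
      exact Finset.sum_congr rfl fun j _ => hterm i j
    rw [this, hsum]
    simp [dotProduct_zero]
  have key : ∀ t : ℝ, 0 ≤ t →
      Q ψ - Q (ψ * Ring.inverse (1 + (t : ℂ) • φ)) ≤ 0 := by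
    intro t ht
    have hu := unit_one_add hq.1 ht
    have hform := psi_formula h1 h2 (t : ℂ) hu
    have hexp : Q ψ = Q (ψ * Ring.inverse (1 + (t : ℂ) • φ))
        - ((t : ℂ) * (t : ℂ)) * Q (φ * Ring.inverse (1 + (t : ℂ) • φ)) := by
      conv_lhs => rw [hform]
      rw [hQsub, hQadd, hQsmul, hQsmul, hQ1, mul_zero, add_zero]
    have hcp : 0 ≤ Q (φ * Ring.inverse (1 + (t : ℂ) • φ)) := hq.2 t ht m A f
    have hcc : (0 : ℂ) ≤ (t : ℂ) * (t : ℂ) := by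
      rw [show (t : ℂ) * (t : ℂ) = ((t * t : ℝ) : ℂ) by push_cast; ring]
      rw [Complex.le_def]
      constructor
      · simpa using mul_nonneg ht ht
      · simp
    have heq : Q ψ - Q (ψ * Ring.inverse (1 + (t : ℂ) • φ))
        = -(((t : ℂ) * (t : ℂ)) * Q (φ * Ring.inverse (1 + (t : ℂ) • φ))) := by
      rw [hexp]; ring
    rw [heq]
    exact neg_nonpos.mpr (mul_nonneg hcc hcp)
  -- tendsto of the correction term
  have hF := tendsto_inv_u h1 h2 hq.1
  have hF2 : Filter.Tendsto
      (fun t : ℝ => toCLM ψ * toCLM (Ring.inverse (1 + (t : ℂ) • φ)))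
      Filter.atTop (nhds (toCLM ψ * 0)) := hF.const_mul _
  rw [mul_zero] at hF2
  have hFn : Filter.Tendsto
      (fun t : ℝ => ‖toCLM ψ * toCLM (Ring.inverse (1 + (t : ℂ) • φ))‖)
      Filter.atTop (nhds 0) := by
    simpa using hF2.norm
  set K : ℝ := ∑ i, ∑ j, ‖(A i)ᴴ * A j‖ * ((∑ p, ‖f i p‖) * (∑ q, ‖f j q‖)) with hK
  have hbound : ∀ t : ℝ,
      ‖Q (ψ * Ring.inverse (1 + (t : ℂ) • φ))‖
        ≤ ‖toCLM ψ * toCLM (Ring.inverse (1 + (t : ℂ) • φ))‖ * K := by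
    intro t
    set χ := ψ * Ring.inverse (1 + (t : ℂ) • φ) with hχ
    have hΦ : toCLM χ = toCLM ψ * toCLM (Ring.inverse (1 + (t : ℂ) • φ)) := toCLM_mul _ _
    calc ‖Q χ‖ ≤ ∑ i, ‖∑ j, star (f i) ⬝ᵥ ((χ ((A i)ᴴ * A j)) *ᵥ f j)‖ := norm_sum_le _ _
      _ ≤ ∑ i, ∑ j, ‖star (f i) ⬝ᵥ ((χ ((A i)ᴴ * A j)) *ᵥ f j)‖ :=
          Finset.sum_le_sum fun i _ => norm_sum_le _ _
      _ ≤ ∑ i, ∑ j, ‖toCLM χ‖ * (‖(A i)ᴴ * A j‖ * ((∑ p, ‖f i p‖) * (∑ q, ‖f j q‖))) := by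
          refine Finset.sum_le_sum fun i _ => Finset.sum_le_sum fun j _ => ?_
          calc ‖star (f i) ⬝ᵥ ((χ ((A i)ᴴ * A j)) *ᵥ f j)‖
              ≤ ‖χ ((A i)ᴴ * A j)‖ * ((∑ p, ‖f i p‖) * (∑ q, ‖f j q‖)) :=
                dot_norm_le _ _ _
            _ ≤ (‖toCLM χ‖ * ‖(A i)ᴴ * A j‖) * ((∑ p, ‖f i p‖) * (∑ q, ‖f j q‖)) := by
                have hle : ‖χ ((A i)ᴴ * A j)‖ ≤ ‖toCLM χ‖ * ‖(A i)ᴴ * A j‖ :=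
                  (toCLM χ).le_opNorm _
                have hnn : (0 : ℝ) ≤ (∑ p, ‖f i p‖) * (∑ q, ‖f j q‖) := by positivity
                exact mul_le_mul_of_nonneg_right hle hnn
            _ = ‖toCLM χ‖ * (‖(A i)ᴴ * A j‖ * ((∑ p, ‖f i p‖) * (∑ q, ‖f j q‖))) := by
                ring
      _ = ‖toCLM χ‖ * K := by
          rw [hK, Finset.mul_sum]
          refine Finset.sum_congr rfl fun i _ => ?_
          rw [Finset.mul_sum]
      _ = ‖toCLM ψ * toCLM (Ring.inverse (1 + (t : ℂ) • φ))‖ * K := by rw [hΦ]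
  have hg : Filter.Tendsto (fun t : ℝ => Q (ψ * Ring.inverse (1 + (t : ℂ) • φ)))
      Filter.atTop (nhds 0) := by
    rw [tendsto_zero_iff_norm_tendsto_zero]
    apply squeeze_zero (fun t => norm_nonneg _) hbound
    simpa using hFn.mul_const K
  have hclosed : IsClosed {z : ℂ | z ≤ 0} := by
    have hset : {z : ℂ | z ≤ 0} = Complex.re ⁻¹' Set.Iic 0 ∩ Complex.im ⁻¹' {0} := by
      ext z
      simp only [Set.mem_setOf_eq, Set.mem_inter_iff, Set.mem_preimage, Set.mem_Iic,
        Set.mem_singleton_iff, Complex.le_def, Complex.zero_re, Complex.zero_im]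
    rw [hset]
    exact (isClosed_Iic.preimage Complex.continuous_re).inter
      (isClosed_singleton.preimage Complex.continuous_im)
  have htends : Filter.Tendsto
      (fun t : ℝ => Q ψ - Q (ψ * Ring.inverse (1 + (t : ℂ) • φ)))
      Filter.atTop (nhds (Q ψ)) := by
    have := Filter.Tendsto.sub (tendsto_const_nhds (x := Q ψ)) hg
    simpa using this
  have hmem : Q ψ ∈ {z : ℂ | z ≤ 0} :=
    hclosed.mem_of_tendsto htends
      (Filter.eventually_atTop.mpr ⟨0, fun t ht => key t ht⟩)
  exact hmem

end Stmt8Aux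

/-- The inverse of an invertible unital q-positive map is conditionally negative. -/
theorem stmt8 {n : ℕ} (φ ψ : Module.End ℂ (MatC n))
    (hinv : φ * ψ = 1 ∧ ψ * φ = 1) (hone : φ 1 = 1) (hq : IsQPos φ) :
    IsCondNeg ψ := by
  have hCPφ : IsCP φ := by
    have h := hq.2 0 le_rfl
    have heq : qRes φ 0 = φ := by
      rw [qRes, Complex.ofReal_zero, show ((0 : ℂ) • φ) = 0 from zero_smul ℂ φ, add_zero,
        Ring.inverse_one, mul_one]
    rwa [heq] at h
  constructor
  · have hφsa : SelfAdjMap φ := cp_selfadj hCPφ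
    have hinj : Function.Injective φ :=
      ((Module.End.isUnit_iff φ).mp ⟨⟨φ, ψ, hinv.1, hinv.2⟩, rfl⟩).injective
    have happ : ∀ x : MatC n, φ (ψ x) = x := by
      intro x
      have h := LinearMap.ext_iff.mp hinv.1 x
      simpa [Module.End.mul_apply] using h
    intro A
    apply hinj
    rw [happ, hφsa, happ]
  · intro m A f hsum
    exact main_ineq hinv.1 hinv.2 hq m A f hsum
end

section
/- Let φ: Mₙ(ℂ) → Mₙ(ℂ) be completely positive and for ε ∈ [0,1] set φ_ε = εI + (1−ε)φ. If there is a monotonically decreasing sequence ε_k ↓ 0 of positives such that φ_{ε_k} is q-positive for every k, then φ is q-positive. -/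
open scoped ComplexOrder BigOperators
open Matrix

/-- `φ_ε = ε I + (1−ε) φ`. -/
noncomputable def epsMap {n : ℕ} (φ : Module.End ℂ (MatC n)) (ε : ℝ) :
    Module.End ℂ (MatC n) :=
  (ε : ℂ) • 1 + ((1 - ε : ℝ) : ℂ) • φ

section Aux

/-- An algebra (or ring) equivalence commutes with `Ring.inverse`. -/
lemma AlgEquiv.map_ringInverse {R A B : Type*} [CommSemiring R] [Ring A] [Ring B]
    [Algebra R A] [Algebra R B] (e : A ≃ₐ[R] B) (x : A) :
    e (Ring.inverse x) = Ring.inverse (e x) := by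
  by_cases hx : IsUnit x
  · obtain ⟨u, rfl⟩ := hx
    have hu : IsUnit (e (u : A)) := by
      refine ⟨Units.map (e : A →* B) u, rfl⟩
    calc e (Ring.inverse (u : A)) = e ↑u⁻¹ := by rw [Ring.inverse_unit]
      _ = ↑(Units.map (e : A →* B) u⁻¹) := rfl
      _ = ↑((Units.map (e : A →* B) u)⁻¹) := by rw [map_inv]
      _ = Ring.inverse (↑(Units.map (e : A →* B) u) : B) := (Ring.inverse_unit _).symm
      _ = Ring.inverse (e ↑u) := rfl
  · have hex : ¬ IsUnit (e x) := by
      intro h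
      exact hx (by simpa using h.map e.symm.toRingEquiv.toRingHom)
    rw [Ring.inverse_non_unit _ hx, Ring.inverse_non_unit _ hex, map_zero]

/-- If `ψ` has no negative eigenvalues, then `1 + t ψ` is invertible for `t ≥ 0`. -/
lemma isUnit_one_add_smul_s12 {n : ℕ} (ψ : Module.End ℂ (MatC n)) (hne : NoNegEig ψ)
    {t : ℝ} (ht : 0 ≤ t) : IsUnit (1 + (t : ℂ) • ψ) := by
  rcases eq_or_lt_of_le ht with h0 | hpos
  · rw [← h0]; simp
  · rw [Module.End.isUnit_iff]
    have hker : LinearMap.ker ((1 : Module.End ℂ (MatC n)) + (t : ℂ) • ψ) = ⊥ := by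
      rw [Submodule.eq_bot_iff]
      intro v hv
      by_contra hv0
      have hv' : v + (t : ℂ) • ψ v = 0 := by
        simpa [LinearMap.add_apply, LinearMap.smul_apply] using LinearMap.mem_ker.mp hv
      have htne : (t : ℂ) ≠ 0 := by
        exact_mod_cast ne_of_gt hpos
      have hev : ψ v = ((- t⁻¹ : ℝ) : ℂ) • v := by
        have : (t : ℂ) • ψ v = -v := eq_neg_of_add_eq_zero_right hv'
        have := congrArg (fun w => (t : ℂ)⁻¹ • w) this
        simp only [smul_smul, inv_mul_cancel₀ htne, one_smul] at this
        rw [this]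
        push_cast
        simp [smul_smul]
      exact hne (-t⁻¹) (neg_lt_zero.mpr (inv_pos.mpr hpos))
        (Module.End.hasEigenvalue_of_hasEigenvector
          ⟨Module.End.mem_eigenspace_iff.mpr hev, hv0⟩)
    have hinj := LinearMap.ker_eq_bot.mp hker
    exact ⟨hinj, LinearMap.injective_iff_surjective.mp hinj⟩

/-- The scalar pairing appearing in `IsCP`, as a linear functional on endomorphisms. -/
noncomputable def scalarL {n m : ℕ} (A : Fin m → MatC n) (f : Fin m → (Fin n → ℂ)) :
    Module.End ℂ (MatC n) →ₗ[ℂ] ℂ where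
  toFun ψ := ∑ i, ∑ j, star (f i) ⬝ᵥ ((ψ ((A i)ᴴ * A j)) *ᵥ f j)
  map_add' ψ ψ' := by
    simp [Matrix.add_mulVec, dotProduct_add, Finset.sum_add_distrib]
  map_smul' c ψ := by
    simp [Matrix.smul_mulVec, dotProduct_smul, Finset.mul_sum]

/-- The set of nonnegative complex numbers is closed. -/
lemma isClosed_nonneg_complex : IsClosed {z : ℂ | 0 ≤ z} := by
  have : {z : ℂ | 0 ≤ z} = {z : ℂ | 0 ≤ z.re} ∩ {z : ℂ | z.im = 0} := by
    ext z
    simp [Complex.le_def, eq_comm]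
  rw [this]
  exact (isClosed_le continuous_const Complex.continuous_re).inter
    (isClosed_eq Complex.continuous_im continuous_const)

end Aux

/-- If `φ` is CP and `φ_{ε_k}` is q-positive along a decreasing positive sequence
`ε_k ↓ 0`, then `φ` is q-positive. -/
theorem stmt12 {n : ℕ} (φ : Module.End ℂ (MatC n)) (hcp : IsCP φ)
    (ε : ℕ → ℝ) (hpos : ∀ k, 0 < ε k) (hanti : Antitone ε)
    (hlim : Filter.Tendsto ε Filter.atTop (nhds 0))
    (hq : ∀ k, IsQPos (epsMap φ (ε k))) :
    IsQPos φ := by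
  classical
  -- Step 1 : `φ` has no negative eigenvalues.
  have hne : NoNegEig φ := by
    intro r hr hEig
    obtain ⟨v, hv⟩ := hEig.exists_hasEigenvector
    have hφv : φ v = ((r : ℂ)) • v := Module.End.mem_eigenspace_iff.mp hv.1
    have hδpos : (0:ℝ) < -r / (1 - r) := div_pos (by linarith) (by linarith)
    obtain ⟨k, hk⟩ := (hlim.eventually (gt_mem_nhds hδpos)).exists
    have hμneg : ε k + (1 - ε k) * r < 0 := by
      have h1 : (0:ℝ) < 1 - r := by linarith
      have h2 := (lt_div_iff₀ h1).mp hk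
      nlinarith
    have hev : epsMap φ (ε k) v = (((ε k + (1 - ε k) * r : ℝ) : ℂ)) • v := by
      simp only [epsMap, LinearMap.add_apply, LinearMap.smul_apply,
        Module.End.one_apply, hφv, smul_smul, ← add_smul]
      congr 1
      push_cast
      ring
    exact (hq k).1 _ hμneg
      (Module.End.hasEigenvalue_of_hasEigenvector
        ⟨Module.End.mem_eigenspace_iff.mpr hev, hv.2⟩)
  refine ⟨hne, fun t ht => ?_⟩
  intro m A f
  -- Step 2 : transfer everything to matrices via a basis.
  set b := Matrix.stdBasis ℂ (Fin n) (Fin n) with hb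
  set e := LinearMap.toMatrixAlgEquiv b with he
  set L : Matrix (Fin n × Fin n) (Fin n × Fin n) ℂ →ₗ[ℂ] ℂ :=
    (scalarL A f).comp e.symm.toLinearMap with hL
  have hLcont : Continuous L := L.continuous_of_finiteDimensional
  set B : ℝ → Matrix (Fin n × Fin n) (Fin n × Fin n) ℂ :=
    fun x => e (epsMap φ x) with hBdef
  set C : ℝ → Matrix (Fin n × Fin n) (Fin n × Fin n) ℂ :=
    fun x => 1 + (t : ℂ) • B x with hCdef
  set F : ℝ → Matrix (Fin n × Fin n) (Fin n × Fin n) ℂ :=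
    fun x => B x * (C x)⁻¹ with hFdef
  have key : ∀ x : ℝ, e (qRes (epsMap φ x) t) = F x := by
    intro x
    rw [qRes, _root_.map_mul, e.map_ringInverse, hFdef]
    congr 1
    rw [Matrix.nonsing_inv_eq_ringInverse]
    congr 1
    simp [hCdef, hBdef, _root_.map_add, _root_.map_one, _root_.map_smul]
  have hG : ∀ x, L (F x) = scalarL A f (qRes (epsMap φ x) t) := by
    intro x
    rw [← key x]
    simp [hL, LinearMap.comp_apply]
  have heps0 : epsMap φ 0 = φ := by
    simp [epsMap]
  -- Step 3 : continuity at `0`.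
  have hBcont : Continuous B := by
    have : B = fun x : ℝ => ((x : ℂ)) • (1 : Matrix (Fin n × Fin n) (Fin n × Fin n) ℂ)
        + (((1 - x : ℝ) : ℂ)) • e φ := by
      funext x
      simp [hBdef, epsMap, _root_.map_add, _root_.map_smul, _root_.map_one]
    rw [this]
    exact (Complex.continuous_ofReal.smul continuous_const).add
      ((Complex.continuous_ofReal.comp (continuous_const.sub continuous_id)).smul
        continuous_const)
  have hCcont : Continuous C := continuous_const.add (hBcont.const_smul (t : ℂ))
  have hC0 : C 0 = e (1 + (t : ℂ) • φ) := by
    simp [hCdef, hBdef, heps0, _root_.map_add, _root_.map_one, _root_.map_smul]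
  have hunitC0 : IsUnit (C 0) := by
    rw [hC0]
    exact (isUnit_one_add_smul_s12 φ hne ht).map e
  have hdetcont : ContinuousAt Ring.inverse (C 0).det := by
    rw [Ring.inverse_eq_inv']
    exact continuousAt_inv₀
      (((Matrix.isUnit_iff_isUnit_det _).mp hunitC0).ne_zero)
  have hinvcont : ContinuousAt (fun x => (C x)⁻¹) 0 :=
    (continuousAt_matrix_inv (C 0) hdetcont).comp hCcont.continuousAt
  have hFcont : ContinuousAt F 0 := hBcont.continuousAt.mul hinvcont
  -- Step 4 : pass to the limit.
  have htend : Filter.Tendsto (fun k => L (F (ε k))) Filter.atTop (nhds (L (F 0))) :=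
    ((hLcont.continuousAt.comp hFcont).tendsto).comp hlim
  have hmem : ∀ k, L (F (ε k)) ∈ {z : ℂ | 0 ≤ z} := by
    intro k
    rw [hG]
    exact (hq k).2 t ht m A f
  have hfin : L (F 0) ∈ {z : ℂ | 0 ≤ z} :=
    isClosed_nonneg_complex.mem_of_tendsto htend
      (Filter.Eventually.of_forall hmem)
  have : (0 : ℂ) ≤ scalarL A f (qRes φ t) := by
    rw [← heps0, ← hG 0]
    exact hfin
  exact this
end

section
/- If φ: Mₙ(ℂ) → Mₙ(ℂ) is q-positive, then for every ε ∈ [0,1) the map φ_ε = εI + (1−ε)φ is q-positive; explicitly, I − (I + t φ_ε)⁻¹ = (1 − 1/(1+tε))·I + [t(1−ε)/(1+tε)²]·φ(I + (t(1−ε)/(1+tε))φ)⁻¹ for all t > 0. -/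
open scoped ComplexOrder BigOperators
open Matrix

-- auxiliary lemmas

lemma isCP_one {n : ℕ} : IsCP (1 : Module.End ℂ (MatC n)) := by
  intro m A f
  have hterm : ∀ i j, star (f i) ⬝ᵥ (((1 : Module.End ℂ (MatC n)) ((A i)ᴴ * A j)) *ᵥ f j)
      = star (A i *ᵥ f i) ⬝ᵥ (A j *ᵥ f j) := by
    intro i j
    simp [Module.End.one_apply, ← Matrix.mulVec_mulVec, Matrix.dotProduct_mulVec,
      Matrix.star_mulVec]
  calc (0:ℂ) ≤ star (∑ i, A i *ᵥ f i) ⬝ᵥ (∑ j, A j *ᵥ f j) :=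
        dotProduct_star_self_nonneg _
    _ = ∑ i, ∑ j, star (A i *ᵥ f i) ⬝ᵥ (A j *ᵥ f j) := by
        have hl : ∀ (g : Fin m → Fin n → ℂ) (w : Fin n → ℂ),
            (∑ i, g i) ⬝ᵥ w = ∑ i, g i ⬝ᵥ w := by
          intro g w
          simp only [dotProduct, Finset.sum_apply, Finset.sum_mul]
          exact Finset.sum_comm
        have hr : ∀ (u : Fin n → ℂ) (g : Fin m → Fin n → ℂ),
            u ⬝ᵥ (∑ i, g i) = ∑ i, u ⬝ᵥ g i := by
          intro u g
          simp only [dotProduct, Finset.sum_apply, Finset.mul_sum]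
          exact Finset.sum_comm
        rw [star_sum, hl]
        exact Finset.sum_congr rfl fun i _ => hr _ _
    _ = ∑ i, ∑ j, star (f i) ⬝ᵥ (((1 : Module.End ℂ (MatC n)) ((A i)ᴴ * A j)) *ᵥ f j) := by
        simp only [hterm]

lemma isCP_combo {n : ℕ} {φ ψ : Module.End ℂ (MatC n)} (hφ : IsCP φ) (hψ : IsCP ψ)
    {a b : ℝ} (ha : 0 ≤ a) (hb : 0 ≤ b) :
    IsCP ((a : ℂ) • φ + (b : ℂ) • ψ) := by
  intro m A f
  have : ∑ i, ∑ j, star (f i) ⬝ᵥ ((((a:ℂ) • φ + (b:ℂ) • ψ) ((A i)ᴴ * A j)) *ᵥ f j)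
      = (a:ℂ) * (∑ i, ∑ j, star (f i) ⬝ᵥ ((φ ((A i)ᴴ * A j)) *ᵥ f j))
        + (b:ℂ) * (∑ i, ∑ j, star (f i) ⬝ᵥ ((ψ ((A i)ᴴ * A j)) *ᵥ f j)) := by
    simp only [LinearMap.add_apply, LinearMap.smul_apply, Matrix.add_mulVec,
      Matrix.smul_mulVec, dotProduct_add, dotProduct_smul,
      Finset.sum_add_distrib, Finset.mul_sum, smul_eq_mul]
  rw [this]
  have ha' : (0:ℂ) ≤ (a:ℂ) := by exact_mod_cast ha
  have hb' : (0:ℂ) ≤ (b:ℂ) := by exact_mod_cast hb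
  exact add_nonneg (mul_nonneg ha' (hφ m A f)) (mul_nonneg hb' (hψ m A f))

lemma unit_of_noNegEig {n : ℕ} {φ : Module.End ℂ (MatC n)} (hne : NoNegEig φ)
    {s : ℝ} (hs : 0 ≤ s) : IsUnit ((1 : Module.End ℂ (MatC n)) + (s : ℂ) • φ) := by
  rcases eq_or_lt_of_le hs with h | h
  · simp [← h]
  · rw [LinearMap.isUnit_iff_ker_eq_bot]
    rw [Submodule.eq_bot_iff]
    intro x hx
    by_contra hx0
    have hx' : x + (s:ℂ) • φ x = 0 := by simpa using hx
    have hs' : (s:ℂ) ≠ 0 := by exact_mod_cast h.ne'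
    have h2 : (s:ℂ) • φ x = -x := by
      rw [eq_neg_iff_add_eq_zero, add_comm]; exact hx'
    have heig : φ x = ((-(1/s) : ℝ) : ℂ) • x := by
      have h3 := congrArg (fun y => ((s:ℂ)⁻¹) • y) h2
      simp only [smul_smul, inv_mul_cancel₀ hs', one_smul, smul_neg] at h3
      rw [h3]
      push_cast
      rw [one_div, neg_smul]

    exact hne (-(1/s)) (neg_lt_zero.mpr (by positivity))
      (Module.End.hasEigenvalue_of_hasEigenvector
        ⟨Module.End.mem_eigenspace_iff.mpr heig, hx0⟩)

lemma ring_inverse_eq_s13 {R : Type*} [Ring R] {a b : R} (ha : IsUnit a) (h : a * b = 1) :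
    Ring.inverse a = b := by
  calc Ring.inverse a = Ring.inverse a * (a * b) := by rw [h, mul_one]
    _ = (Ring.inverse a * a) * b := by rw [mul_assoc]
    _ = b := by rw [Ring.inverse_mul_cancel a ha, one_mul]

lemma E1_lemma {n : ℕ} (φ : Module.End ℂ (MatC n)) (ε t : ℝ) (hc : (0:ℝ) < 1 + t * ε) :
    (1 : Module.End ℂ (MatC n)) + (t : ℂ) • epsMap φ ε
      = ((1 + t * ε : ℝ) : ℂ) • ((1 : Module.End ℂ (MatC n))
          + ((t * (1 - ε) / (1 + t * ε) : ℝ) : ℂ) • φ) := by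
  have hcc : (1:ℂ) + (t:ℂ) * (ε:ℂ) ≠ 0 := by exact_mod_cast hc.ne'
  rw [epsMap]
  match_scalars
  · push_cast; ring
  · push_cast
    field_simp

lemma unit2 {n : ℕ} (φ : Module.End ℂ (MatC n)) (hne : NoNegEig φ) (ε t : ℝ)
    (h0 : 0 ≤ ε) (h1 : ε < 1) (ht : 0 < t) :
    IsUnit ((1 : Module.End ℂ (MatC n)) + (t : ℂ) • epsMap φ ε) := by
  have hc : (0:ℝ) < 1 + t * ε := by positivity
  have hc' : ((1 + t * ε : ℝ) : ℂ) ≠ 0 := by exact_mod_cast hc.ne'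
  have hε : (0:ℝ) < 1 - ε := by linarith
  have hs0 : (0:ℝ) ≤ t * (1 - ε) / (1 + t * ε) := by positivity
  rw [E1_lemma φ ε t hc, Algebra.smul_def]
  exact ((isUnit_iff_ne_zero.mpr hc').map
    (algebraMap ℂ (Module.End ℂ (MatC n)))).mul (unit_of_noNegEig hne hs0)

lemma key {n : ℕ} (φ : Module.End ℂ (MatC n)) (hq : IsQPos φ)
    (ε : ℝ) (h0 : 0 ≤ ε) (h1 : ε < 1) (t : ℝ) (ht : 0 < t) :
    (1 : Module.End ℂ (MatC n)) - Ring.inverse (1 + (t : ℂ) • epsMap φ ε)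
        = ((1 - 1 / (1 + t * ε) : ℝ) : ℂ) • (1 : Module.End ℂ (MatC n))
          + ((t * (1 - ε) / (1 + t * ε) ^ 2 : ℝ) : ℂ) •
              qRes φ (t * (1 - ε) / (1 + t * ε)) := by
  have hc : (0:ℝ) < 1 + t * ε := by positivity
  have hc' : ((1 + t * ε : ℝ) : ℂ) ≠ 0 := by exact_mod_cast hc.ne'
  have hε : (0:ℝ) < 1 - ε := by linarith
  set s : ℝ := t * (1 - ε) / (1 + t * ε) with hs_def
  have hs0 : 0 ≤ s := by positivity
  have hu : IsUnit ((1 : Module.End ℂ (MatC n)) + (s : ℂ) • φ) :=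
    unit_of_noNegEig hq.1 hs0
  set B := Ring.inverse ((1 : Module.End ℂ (MatC n)) + (s : ℂ) • φ) with hBdef
  have hinv : Ring.inverse ((1 : Module.End ℂ (MatC n)) + (t : ℂ) • epsMap φ ε)
      = (((1 + t * ε : ℝ) : ℂ))⁻¹ • B := by
    apply ring_inverse_eq_s13 (unit2 φ hq.1 ε t h0 h1 ht)
    rw [E1_lemma φ ε t hc, smul_mul_assoc, mul_smul_comm, smul_smul,
      mul_inv_cancel₀ hc', Ring.mul_inverse_cancel _ hu, one_smul]
  have hqr : qRes φ s = φ * B := rfl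
  have hB2 : B = 1 - (s : ℂ) • qRes φ s := by
    have h := Ring.mul_inverse_cancel _ hu
    rw [add_mul, one_mul, smul_mul_assoc, ← hBdef, ← hqr] at h
    rw [eq_sub_iff_add_eq, h]
  have cast1 : ((1 - 1/(1 + t*ε) : ℝ) : ℂ) = 1 - (((1 + t*ε : ℝ) : ℂ))⁻¹ := by
    push_cast; ring
  have hcc : (1:ℂ) + (t:ℂ) * (ε:ℂ) ≠ 0 := by exact_mod_cast hc.ne'
  have cast2 : ((t * (1-ε) / (1 + t*ε)^2 : ℝ) : ℂ)
      = (((1 + t*ε : ℝ) : ℂ))⁻¹ * ((s : ℝ) : ℂ) := by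
    rw [hs_def]; push_cast; field_simp; try ring
    try exact Or.inl trivial
  rw [hinv, hB2, cast1, cast2]
  module

theorem qpos_epsMap {n : ℕ} (φ : Module.End ℂ (MatC n)) (hq : IsQPos φ)
    (ε : ℝ) (h0 : 0 ≤ ε) (h1 : ε < 1) :
    IsQPos (epsMap φ ε) := by
  have hε : (0:ℝ) < 1 - ε := by linarith
  constructor
  · intro r hr heig
    obtain ⟨x, hx⟩ := heig.exists_hasEigenvector
    have hax := hx.apply_eq_smul
    rw [epsMap] at hax
    simp only [LinearMap.add_apply, LinearMap.smul_apply, Module.End.one_apply] at hax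
    have hμ : (r - ε) / (1 - ε) < 0 := div_neg_of_neg_of_pos (by linarith) hε
    have h1e : ((1 - ε : ℝ) : ℂ) ≠ 0 := by exact_mod_cast hε.ne'
    have heq : φ x = (((r - ε) / (1 - ε) : ℝ) : ℂ) • x := by
      have h2 : ((1 - ε : ℝ) : ℂ) • φ x = ((r : ℂ) - (ε : ℂ)) • x := by
        rw [sub_smul]
        linear_combination (norm := module) hax
      have h3 := congrArg (fun y => (((1 - ε : ℝ) : ℂ))⁻¹ • y) h2
      simp only [smul_smul, inv_mul_cancel₀ h1e, one_smul] at h3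
      rw [h3]
      congr 1
      push_cast
      field_simp
    exact hq.1 _ hμ (Module.End.hasEigenvalue_of_hasEigenvector
      ⟨Module.End.mem_eigenspace_iff.mpr heq, hx.right⟩)
  · intro t ht
    rcases eq_or_lt_of_le ht with h | h
    · have h00 : qRes (epsMap φ ε) t = epsMap φ ε := by
        rw [qRes, ← h]
        simp
      rw [h00, epsMap]
      have hφ : φ = qRes φ 0 := by rw [qRes]; simp
      rw [hφ]
      exact isCP_combo isCP_one (hq.2 0 le_rfl) h0 hε.le
    · -- t > 0
      set s : ℝ := t * (1 - ε) / (1 + t * ε) with hs_def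
      have hc : (0:ℝ) < 1 + t * ε := by positivity
      have hc' : ((1 + t * ε : ℝ) : ℂ) ≠ 0 := by exact_mod_cast hc.ne'
      have ht' : (t : ℂ) ≠ 0 := by exact_mod_cast h.ne'
      have hs0 : 0 ≤ s := by positivity
      have hkey := key φ hq ε h0 h1 t h
      rw [← hs_def] at hkey
      have hucomp : ((1 : Module.End ℂ (MatC n)) + (t : ℂ) • epsMap φ ε)
          * Ring.inverse (1 + (t : ℂ) • epsMap φ ε) = 1 :=
        Ring.mul_inverse_cancel _ (unit2 φ hq.1 ε t h0 h1 h)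
      have h2 : (t : ℂ) • (epsMap φ ε * Ring.inverse (1 + (t : ℂ) • epsMap φ ε))
          = 1 - Ring.inverse (1 + (t : ℂ) • epsMap φ ε) := by
        rw [add_mul, one_mul, smul_mul_assoc] at hucomp
        rw [eq_sub_iff_add_eq, add_comm]
        exact hucomp
      have hq1 : qRes (epsMap φ ε) t
          = ((ε / (1 + t * ε) : ℝ) : ℂ) • (1 : Module.End ℂ (MatC n))
            + (((1 - ε) / (1 + t * ε) ^ 2 : ℝ) : ℂ) • qRes φ s := by
        have h3 := congrArg (fun y => ((t : ℂ))⁻¹ • y) h2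
        simp only [smul_smul, inv_mul_cancel₀ ht', one_smul] at h3
        have hqr : qRes (epsMap φ ε) t
            = epsMap φ ε * Ring.inverse (1 + (t : ℂ) • epsMap φ ε) := rfl
        have hcc : (1:ℂ) + (t:ℂ) * (ε:ℂ) ≠ 0 := by exact_mod_cast hc.ne'
        have c3 : ((ε / (1 + t*ε) : ℝ) : ℂ)
            = ((t:ℂ))⁻¹ * ((1 - 1/(1 + t*ε) : ℝ) : ℂ) := by
          push_cast
          field_simp
          try ring
        have c4 : (((1-ε) / (1 + t*ε)^2 : ℝ) : ℂ)
            = ((t:ℂ))⁻¹ * ((t * (1-ε) / (1 + t*ε)^2 : ℝ) : ℂ) := by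
          push_cast
          field_simp
          try ring
        rw [hqr, h3, hkey, c3, c4]
        module
      rw [hq1]
      exact isCP_combo isCP_one (hq.2 s hs0) (by positivity) (by positivity)


/-- If `φ` is q-positive then `φ_ε` is q-positive for `ε ∈ [0,1)`, with the explicit
resolvent identity. -/
theorem stmt13 {n : ℕ} (φ : Module.End ℂ (MatC n)) (hq : IsQPos φ)
    (ε : ℝ) (h0 : 0 ≤ ε) (h1 : ε < 1) :
    IsQPos (epsMap φ ε) ∧
    ∀ t : ℝ, 0 < t →
      (1 : Module.End ℂ (MatC n)) - Ring.inverse (1 + (t : ℂ) • epsMap φ ε)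
        = ((1 - 1 / (1 + t * ε) : ℝ) : ℂ) • (1 : Module.End ℂ (MatC n))
          + ((t * (1 - ε) / (1 + t * ε) ^ 2 : ℝ) : ℂ) •
              qRes φ (t * (1 - ε) / (1 + t * ε)) := by
  exact ⟨qpos_epsMap φ hq ε h0 h1, fun t ht => key φ hq ε h0 h1 t ht⟩
end
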